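/- arXiv:1508.06858 — 3 statements merged into one kernel-verified Lean document; each statement's English description precedes it below -/
import Mathlib

section
/- Let n ≥ 1, let u : ℝⁿ → ℝⁿ be differentiable at a point x, let i ∈ {1,…,n}, and let g : ℝⁿ → ℝ be differentiable at u(x). Define U^i : ℝⁿ → ℝⁿ by letting its j-th component equal the j-th component u_j of u for j ≠ i, and its i-th component equal g ∘ u. Then U^i is differentiable at x and det(DU^i(x)) = (∂g/∂y_i)(u(x)) · det(Du(x)), where ∂g/∂y_i denotes the i-th partial derivative of g. -/
/-- Row-replacement identity for Jacobian determinants: if `u : ℝⁿ → ℝⁿ`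
is differentiable at `x`, `g : ℝⁿ → ℝ` is differentiable at `u x`, and `Uᵢ` is obtained
from `u` by replacing the `i`-th component with `g ∘ u`, then `Uᵢ` is differentiable at `x`
and `det DUᵢ(x) = ∂ᵢg(u(x)) · det Du(x)`. -/
theorem jacobian_det_row_replacement
    (n : ℕ) (hn : 1 ≤ n)
    (u : (Fin n → ℝ) → Fin n → ℝ) (x : Fin n → ℝ)
    (hu : DifferentiableAt ℝ u x)
    (i : Fin n) (g : (Fin n → ℝ) → ℝ) (hg : DifferentiableAt ℝ g (u x))
    (Ui : (Fin n → ℝ) → Fin n → ℝ)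
    (hUi : ∀ y j, Ui y j = if j = i then g (u y) else u y j) :
    DifferentiableAt ℝ Ui x ∧
      (fderiv ℝ Ui x).det = fderiv ℝ g (u x) (Pi.single i 1) * (fderiv ℝ u x).det := by
  classical
  set Du := fderiv ℝ u x with hDu
  set G := fderiv ℝ g (u x) with hG
  set A : (Fin n → ℝ) →L[ℝ] (Fin n → ℝ) :=
    ContinuousLinearMap.pi (fun j => if j = i then G else ContinuousLinearMap.proj j) with hA
  have hF : HasFDerivAt (fun y : Fin n → ℝ => fun j => if j = i then g y else y j) A (u x) := by
    rw [hasFDerivAt_pi']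
    intro j
    by_cases h : j = i
    · subst h
      simpa [hA, ContinuousLinearMap.proj_pi] using hg.hasFDerivAt
    · simp only [h, if_false]
      have : HasFDerivAt (fun y : Fin n → ℝ => y j)
          (ContinuousLinearMap.proj j : (Fin n → ℝ) →L[ℝ] ℝ) (u x) :=
        (ContinuousLinearMap.proj j : (Fin n → ℝ) →L[ℝ] ℝ).hasFDerivAt
      simpa [hA, ContinuousLinearMap.proj_pi, h] using this
  have hUieq : Ui = (fun y : Fin n → ℝ => fun j => if j = i then g y else y j) ∘ u := by
    funext y j
    simp [hUi y j]
  have hUd : HasFDerivAt Ui (A.comp Du) x := by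
    rw [hUieq]
    exact hF.comp x hu.hasFDerivAt
  refine ⟨hUd.differentiableAt, ?_⟩
  rw [hUd.fderiv]
  have hcomp : (A.comp Du).det = A.det * Du.det := by
    simp only [ContinuousLinearMap.det, ContinuousLinearMap.coe_comp]
    exact LinearMap.det_comp _ _
  rw [hcomp]
  congr 1
  -- A.det = G (Pi.single i 1)
  rw [ContinuousLinearMap.det, ← LinearMap.det_toMatrix (Pi.basisFun ℝ (Fin n))]
  have hM : LinearMap.toMatrix (Pi.basisFun ℝ (Fin n)) (Pi.basisFun ℝ (Fin n)) (A : _ →ₗ[ℝ] _)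
      = (1 : Matrix (Fin n) (Fin n) ℝ).updateRow i
          (∑ k, (fun m => G (Pi.single m 1)) k • (1 : Matrix (Fin n) (Fin n) ℝ) k) := by
    ext j k
    rw [LinearMap.toMatrix_apply]
    by_cases h : j = i
    · subst h
      simp [hA, ContinuousLinearMap.proj_pi, Matrix.one_apply, Pi.single_apply, mul_ite,
        Finset.sum_ite_eq]
    · simp [hA, h, Ne.symm h, Matrix.updateRow_apply, Matrix.one_apply, Pi.single_apply]
  rw [hM, Matrix.det_updateRow_sum]
  simp
end

section
/- Let n ≥ 1, let u : ℝⁿ → ℝⁿ be differentiable at a point x, let ψ : ℝⁿ → ℝⁿ be differentiable at u(x), and let φ : ℝⁿ → ℝ satisfy div ψ = φ, i.e. Σ_{i=1}^n (∂ψ_i/∂y_i)(y) = φ(y) for all y ∈ ℝⁿ (here it suffices that this holds at y = u(x)). For i = 1,…,n define U^i : ℝⁿ → ℝⁿ by letting its j-th component equal u_j for j ≠ i and its i-th component equal ψ_i ∘ u. Then φ(u(x)) · det(Du(x)) = Σ_{i=1}^n det(DU^i(x)). -/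
/-- The key algebraic identity (9) of the paper: if `div ψ = φ` (at the
point `u x`), and `Uⁱ` is obtained from `u` by replacing the `i`-th component with
`ψᵢ ∘ u`, then `φ(u(x)) · det Du(x) = ∑ᵢ det DUⁱ(x)`. -/
theorem sum_jacobian_det_eq_comp_mul_det
    (n : ℕ) (hn : 1 ≤ n)
    (u : (Fin n → ℝ) → Fin n → ℝ) (x : Fin n → ℝ)
    (hu : DifferentiableAt ℝ u x)
    (ψ : (Fin n → ℝ) → Fin n → ℝ) (hψ : DifferentiableAt ℝ ψ (u x))
    (φ : (Fin n → ℝ) → ℝ)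
    (hdiv : ∑ i : Fin n, fderiv ℝ ψ (u x) (Pi.single i 1) i = φ (u x))
    (U : Fin n → (Fin n → ℝ) → Fin n → ℝ)
    (hU : ∀ i y j, U i y j = if j = i then ψ (u y) i else u y j) :
    φ (u x) * (fderiv ℝ u x).det = ∑ i : Fin n, (fderiv ℝ (U i) x).det := by
  have hsing : ∀ l : Fin n, (fun j' : Fin n => if j' = l then (1:ℝ) else 0) = Pi.single l 1 := by
    intro l; funext j'; simp [Pi.single_apply]
  set Du := fderiv ℝ u x with hDu
  set Dψ := fderiv ℝ ψ (u x) with hDψ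
  -- derivative of each Uⁱ
  have hcomp : HasFDerivAt (fun y => ψ (u y)) (Dψ.comp Du) x :=
    hψ.hasFDerivAt.comp x hu.hasFDerivAt
  have hUder : ∀ i : Fin n, HasFDerivAt (U i)
      (ContinuousLinearMap.pi fun j =>
        if j = i then (ContinuousLinearMap.proj i).comp (Dψ.comp Du)
        else (ContinuousLinearMap.proj (R := ℝ) (φ := fun _ : Fin n => ℝ) j).comp Du) x := by
    intro i
    rw [hasFDerivAt_pi]
    intro j
    have : (fun y => U i y j) = fun y => if j = i then ψ (u y) i else u y j := by
      funext y; exact hU i y j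
    rw [this]
    by_cases hji : j = i
    · simp only [hji, if_pos rfl]
      exact (ContinuousLinearMap.proj i).hasFDerivAt.comp x hcomp
    · simp only [if_neg hji]
      exact (ContinuousLinearMap.proj j).hasFDerivAt.comp x hu.hasFDerivAt
  -- matrices
  set M := LinearMap.toMatrix' (Du : (Fin n → ℝ) →ₗ[ℝ] Fin n → ℝ) with hM
  set B := LinearMap.toMatrix' (Dψ : (Fin n → ℝ) →ₗ[ℝ] Fin n → ℝ) with hB
  have hdetU : ∀ i : Fin n, (fderiv ℝ (U i) x).det = B i i * M.det := by
    intro i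
    rw [(hUder i).fderiv]
    rw [ContinuousLinearMap.det, ← LinearMap.det_toMatrix']
    have hmat : LinearMap.toMatrix'
        ((ContinuousLinearMap.pi fun j =>
          if j = i then (ContinuousLinearMap.proj i).comp (Dψ.comp Du)
          else (ContinuousLinearMap.proj (R := ℝ) (φ := fun _ : Fin n => ℝ) j).comp Du :
          (Fin n → ℝ) →L[ℝ] Fin n → ℝ) : (Fin n → ℝ) →ₗ[ℝ] Fin n → ℝ)
        = M.updateRow i (∑ k, B i k • M k) := by
      ext j k
      rw [LinearMap.toMatrix'_apply]
      by_cases hji : j = i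
      · subst hji
        simp only [Matrix.updateRow_self, ContinuousLinearMap.coe_coe,
          ContinuousLinearMap.pi_apply, if_pos rfl, if_true, Finset.sum_apply, Pi.smul_apply,
          smul_eq_mul]
        have : ∀ l, B j l * M l k
            = Dψ (Pi.single l 1) j * M l k := by
          intro l
          rw [hB, LinearMap.toMatrix'_apply]
          rfl
        simp only [this]
        have hMk : ∀ l, M l k = Du (fun j' => if j' = k then 1 else 0) l := by
          intro l; rw [hM, LinearMap.toMatrix'_apply, ← hsing]; rfl
        simp only [ContinuousLinearMap.comp_apply, ContinuousLinearMap.proj_apply]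
        have hsingle : (Du (fun j' => if j' = k then 1 else 0) : Fin n → ℝ)
            = ∑ l, (Du (fun j' => if j' = k then 1 else 0) l) • (Pi.single l 1 : Fin n → ℝ) := by
          funext m
          rw [Finset.sum_apply]
          simp [Pi.single_apply, Finset.sum_ite_eq']
        rw [← hsing]
        calc Dψ (Du (fun j' => if j' = k then 1 else 0)) j
            = Dψ (∑ l, (Du (fun j' => if j' = k then 1 else 0) l) • (Pi.single l 1 : Fin n → ℝ)) j := by
              rw [← hsingle]
          _ = ∑ l, Dψ (Pi.single l 1) j * Du (fun j' => if j' = k then 1 else 0) l := by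
              rw [map_sum]
              simp [mul_comm]
          _ = ∑ l, Dψ (Pi.single l 1) j * M l k := by
              simp only [hMk]
      · simp only [Matrix.updateRow_ne hji, ContinuousLinearMap.coe_coe,
          ContinuousLinearMap.pi_apply, if_neg hji, ContinuousLinearMap.comp_apply,
          ContinuousLinearMap.proj_apply]
        rw [hM, LinearMap.toMatrix'_apply]
        rfl
    rw [hmat, Matrix.det_updateRow_sum]
    simp
  have hdetu : (Du : (Fin n → ℝ) →L[ℝ] Fin n → ℝ).det = M.det := by
    rw [ContinuousLinearMap.det, ← LinearMap.det_toMatrix']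
  rw [hdetu]
  simp only [hdetU]
  rw [← Finset.sum_mul]
  congr 1
  rw [← hdiv]
  apply Finset.sum_congr rfl
  intro i _
  rw [hB, LinearMap.toMatrix'_apply]
  rfl
end

section
/- Let 1 < d̄ < 2 and 0 < α < 1. Set L = {(x,0) ∈ ℝ² : 0 ≤ x ≤ 1} and D = {(x,y) ∈ ℝ² : 0 < x < 1, 0 < y < min(x, 1−x)}. Then there exist r ∈ (0,1), an integer N ≥ 1, and maps S_1, …, S_N : ℝ² → ℝ², each a similarity of ratio r (i.e. ‖S_i(a) − S_i(b)‖ = r‖a − b‖ for all a, b ∈ ℝ²; equivalently the one-dimensional Hausdorff measure of S_i(L) equals r), such that: (ii) there exists a continuous curve γ : [0,1] → ℝ² with γ(0) = (0,0), γ(1) = (1,0), and range of γ equal to the union ⋃_{i=1}^N S_i(L); (iii) N·r^{d̄} = 1; (iv) S_i(D) ⊆ D for all i, S_i(D) ∩ S_j(D) = ∅ whenever i ≠ j, and the closures of S_i(D) and S_j(D) are disjoint whenever |i − j| > 1; (v) r < 1/2 and 2·r^{1−α} ≤ 1. -/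
open MeasureTheory

/-- The horizontal unit segment `L = [0,1] × {0} ⊆ ℝ²`. -/
def segL : Set (EuclideanSpace ℝ (Fin 2)) :=
  {q | q 0 ∈ Set.Icc (0:ℝ) 1 ∧ q 1 = 0}

/-- The open triangle `D = {(x,y) : 0 < x < 1, 0 < y < min(x, 1-x)}`. -/
def triD : Set (EuclideanSpace ℝ (Fin 2)) :=
  {q | 0 < q 0 ∧ q 0 < 1 ∧ 0 < q 1 ∧ q 1 < min (q 0) (1 - q 0)}

set_option maxHeartbeats 2000000

noncomputable section SelfSimAux


def baseX (M : ℕ) (r δ : ℝ) (k : ℕ) : ℝ :=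
  ((M : ℝ) - 1 + k) * r + 2 * ((M : ℝ) - 1) * (k : ℝ) * δ

def vert (M : ℕ) (r δ hh : ℝ) (n : ℕ) : ℝ × ℝ :=
  if n + 1 < M then ((n : ℝ) * r, 0)
  else
    let u := n - (M - 1)
    let k := u / (2 * M - 1)
    let j := u % (2 * M - 1)
    if k < M - 1 then
      if j = 0 then (baseX M r δ k, 0)
      else (baseX M r δ k + r + ((j : ℝ) - 1) * δ,
        if j ≤ M then ((j : ℝ) - 1) * hh else (2 * (M : ℝ) - 1 - (j : ℝ)) * hh)
    else (baseX M r δ (M - 1) + ((u - (2 * M - 1) * (M - 1) : ℕ) : ℝ) * r, 0)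

def Ncount (M : ℕ) : ℕ := M * (2 * M - 1)

def HData (M : ℕ) (r δ hh : ℝ) (n : ℕ) (a : ℝ) : Prop :=
  vert M r δ hh n = (a, 0) ∧ vert M r δ hh (n+1) = (a + r, 0) ∧ 0 ≤ a ∧
  ((n = 0 ∧ a = 0) ∨ r ≤ a) ∧ ((n + 1 = Ncount M ∧ a + r = 1) ∨ a + 2*r ≤ 1)

def UData (M : ℕ) (r δ hh : ℝ) (n k i : ℕ) : Prop :=
  k ≤ M - 2 ∧ i ≤ M - 2 ∧ n = (M-1) + (2*M-1)*k + 1 + i ∧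
  vert M r δ hh n = (baseX M r δ k + r + (i:ℝ)*δ, (i:ℝ)*hh) ∧
  vert M r δ hh (n+1) = (baseX M r δ k + r + ((i:ℝ)+1)*δ, ((i:ℝ)+1)*hh)

def DData (M : ℕ) (r δ hh : ℝ) (n k i : ℕ) : Prop :=
  k ≤ M - 2 ∧ i ≤ M - 2 ∧ n = (M-1) + (2*M-1)*k + M + (M-2-i) ∧
  vert M r δ hh n = (baseX M r δ k + r + (2*(M:ℝ)-3-(i:ℝ))*δ, ((i:ℝ)+1)*hh) ∧
  vert M r δ hh (n+1) = (baseX M r δ k + r + (2*(M:ℝ)-2-(i:ℝ))*δ, (i:ℝ)*hh)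

variable {M : ℕ} {r δ hh : ℝ}

lemma vert_start {n : ℕ} (hn : n + 1 < M) : vert M r δ hh n = ((n : ℝ) * r, 0) := by
  simp [vert, hn]

lemma vert_unit0 {k : ℕ} (hM : 3 ≤ M) (hk : k < M - 1) :
    vert M r δ hh (M - 1 + (2 * M - 1) * k) = (baseX M r δ k, 0) := by
  have h1 : ¬ (M - 1 + (2 * M - 1) * k + 1 < M) := by
    rcases Nat.eq_zero_or_pos k with h | h <;> omega
  have h2 : M - 1 + (2 * M - 1) * k - (M - 1) = (2 * M - 1) * k := by omega
  have h3 : (2 * M - 1) * k / (2 * M - 1) = k := Nat.mul_div_cancel_left _ (by omega)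
  have h4 : (2 * M - 1) * k % (2 * M - 1) = 0 := Nat.mul_mod_right _ _
  simp only [vert, h1, if_false, h2, h3, h4, if_pos hk]
  simp

lemma vert_tooth {k j : ℕ} (hM : 3 ≤ M) (hk : k < M - 1) (hj1 : 1 ≤ j) (hj : j < 2 * M - 1) :
    vert M r δ hh (M - 1 + (2 * M - 1) * k + j)
      = (baseX M r δ k + r + ((j : ℝ) - 1) * δ,
         if j ≤ M then ((j : ℝ) - 1) * hh else (2 * (M : ℝ) - 1 - (j : ℝ)) * hh) := by
  have h1 : ¬ (M - 1 + (2 * M - 1) * k + j + 1 < M) := by omega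
  have h2 : M - 1 + (2 * M - 1) * k + j - (M - 1) = (2 * M - 1) * k + j := by omega
  have h3 : ((2 * M - 1) * k + j) / (2 * M - 1) = k := by
    rw [Nat.mul_add_div (by omega), Nat.div_eq_of_lt hj, Nat.add_zero]
  have h4 : ((2 * M - 1) * k + j) % (2 * M - 1) = j := by
    rw [Nat.mul_add_mod, Nat.mod_eq_of_lt hj]
  simp only [vert, h1, if_false, h2, h3, h4, if_pos hk, if_neg (by omega : ¬ j = 0)]

lemma vert_end {l : ℕ} (hM : 3 ≤ M) (hl : l ≤ M) :
    vert M r δ hh (M - 1 + (2 * M - 1) * (M - 1) + l)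
      = (baseX M r δ (M - 1) + (l : ℝ) * r, 0) := by
  have h1 : ¬ (M - 1 + (2 * M - 1) * (M - 1) + l + 1 < M) := by omega
  have h2 : M - 1 + (2 * M - 1) * (M - 1) + l - (M - 1) = (2 * M - 1) * (M - 1) + l := by omega
  have h3 : ((2 * M - 1) * (M - 1) + l) / (2 * M - 1) = M - 1 + l / (2 * M - 1) :=
    Nat.mul_add_div (by omega) _ _
  have h4 : l / (2 * M - 1) = 0 := Nat.div_eq_of_lt (by omega)
  have h6 : (2 * M - 1) * (M - 1) + l - (2 * M - 1) * (M - 1) = l := by omega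
  simp only [vert, h1, if_false, h2, h3, h4, Nat.add_zero, h6]
  rw [if_neg (by omega : ¬ (M - 1 < M - 1))]

lemma baseX_succ (k : ℕ) : baseX M r δ (k+1) = baseX M r δ k + (r + 2*((M:ℝ)-1)*δ) := by
  unfold baseX; push_cast; ring

lemma baseX_diff {k k' : ℕ} (hkk : k ≤ k') :
    baseX M r δ k' - baseX M r δ k = ((k' - k : ℕ):ℝ) * (r + 2*((M:ℝ)-1)*δ) := by
  unfold baseX; push_cast [Nat.cast_sub hkk]; ring

lemma baseX_lb (hM : 3 ≤ M) (hr : 0 ≤ r) (hδ : 0 ≤ δ) (k : ℕ) :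
    ((M:ℝ)-1)*r ≤ baseX M r δ k := by
  have h1 : (3:ℝ) ≤ (M:ℝ) := by exact_mod_cast hM
  have h2 : (0:ℝ) ≤ (k:ℝ) := Nat.cast_nonneg k
  unfold baseX
  nlinarith [mul_nonneg h2 hr, mul_nonneg (mul_nonneg (by linarith : (0:ℝ) ≤ 2*((M:ℝ)-1)) h2) hδ]

theorem classify (hM : 3 ≤ M) (hr : 0 < r) (hδ : 0 < δ)
    (hsum : baseX M r δ (M-1) + (M:ℝ)*r = 1) (hMr : (M:ℝ)*r ≤ 1/3)
    {n : ℕ} (hn : n < Ncount M) :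
    (∃ a, HData M r δ hh n a) ∨ (∃ k i, UData M r δ hh n k i) ∨
      (∃ k i, DData M r δ hh n k i) := by
  have hM1 : (3:ℝ) ≤ (M:ℝ) := by exact_mod_cast hM
  have hNc : Ncount M = (2*M-1)*(M-1) + (2*M-1) := by
    obtain ⟨M', rfl⟩ : ∃ M', M = M' + 1 := ⟨M - 1, by omega⟩
    unfold Ncount
    have e1 : 2*(M'+1)-1 = 2*M'+1 := by omega
    have e2 : (M'+1)-1 = M' := by omega
    rw [e1, e2]; ring
  rcases lt_or_ge (n+1) M with hA | hB
  · -- initial horizontal run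
    left
    refine ⟨(n:ℝ)*r, vert_start hA, ?_, by positivity, ?_, ?_⟩
    · rcases lt_or_ge (n+2) M with h2 | h2
      · rw [vert_start (by omega)]; rw [Prod.mk.injEq]
        refine ⟨by push_cast; ring, rfl⟩
      · have hz : M - 1 + (2*M-1)*0 = n + 1 := by omega
        rw [← hz, vert_unit0 hM (by omega)]
        have hc : ((n:ℝ)) = (M:ℝ) - 2 := by
          have h' : n + 2 = M := by omega
          have := congrArg (Nat.cast : ℕ → ℝ) h'
          push_cast at this; linarith
        rw [Prod.mk.injEq]
        exact ⟨by unfold baseX; rw [hc]; push_cast; ring, rfl⟩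
    · rcases Nat.eq_zero_or_pos n with h | h
      · exact Or.inl ⟨h, by simp [h]⟩
      · right
        have : (1:ℝ) ≤ (n:ℝ) := by exact_mod_cast h
        nlinarith
    · right
      have : ((n:ℝ)+2) ≤ (M:ℝ) := by exact_mod_cast (by omega : n + 2 ≤ M)
      nlinarith
  · have hu0 : n - (M-1) = n - (M-1) := rfl
    rcases lt_or_ge (n - (M-1)) ((2*M-1)*(M-1)) with hT | hE
    · -- teeth region
      obtain ⟨k, j, hjlt, hu⟩ : ∃ k j, j < 2*M-1 ∧ n - (M-1) = (2*M-1)*k + j :=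
        ⟨(n-(M-1)) / (2*M-1), (n-(M-1)) % (2*M-1), Nat.mod_lt _ (by omega),
          (Nat.div_add_mod _ _).symm⟩
      have hk : k < M - 1 := by
        by_contra hcon
        push_neg at hcon
        have := Nat.mul_le_mul_left (2*M-1) hcon
        omega
      have hnm : n = M - 1 + (2*M-1)*k + j := by omega
      rcases Nat.eq_zero_or_pos j with hj0 | hj1
      · -- unit horizontal before a tooth
        left
        refine ⟨baseX M r δ k, ?_, ?_, by nlinarith [baseX_lb hM hr.le hδ.le (k:=k) (r:=r) (δ:=δ)], ?_, ?_⟩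
        · rw [show n = M - 1 + (2*M-1)*k by omega, vert_unit0 hM hk]
        · rw [show n + 1 = M - 1 + (2*M-1)*k + 1 by omega,
            vert_tooth hM hk le_rfl (by omega), if_pos (by omega : 1 ≤ M), Prod.mk.injEq]
          exact ⟨by push_cast; ring, by push_cast; ring⟩
        · right; nlinarith [baseX_lb hM hr.le hδ.le (k:=k) (r:=r) (δ:=δ)]
        · right
          have hd := baseX_diff (M := M) (r := r) (δ := δ) (show k ≤ M-1 by omega)
          have h1 : (1:ℝ) ≤ ((M-1-k : ℕ):ℝ) := by exact_mod_cast (by omega : 1 ≤ M-1-k)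
          have h2 : (0:ℝ) ≤ 2*((M:ℝ)-1)*δ := by nlinarith
          nlinarith
      · rcases le_or_gt j (M-1) with hjM | hjM
        · -- up leg, level i = j-1
          right; left
          have hcast : ((j-1:ℕ):ℝ) = (j:ℝ) - 1 := by
            push_cast [Nat.cast_sub hj1]; ring
          refine ⟨k, j - 1, by omega, by omega, by omega, ?_, ?_⟩
          · rw [hnm, vert_tooth hM hk hj1 hjlt, if_pos (by omega : j ≤ M), Prod.mk.injEq]
            exact ⟨by rw [hcast], by rw [hcast]⟩
          · rw [show n + 1 = M - 1 + (2*M-1)*k + (j+1) by omega,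
              vert_tooth hM hk (by omega) (by omega), if_pos (by omega : j + 1 ≤ M),
              Prod.mk.injEq]
            exact ⟨by rw [hcast]; push_cast; ring, by rw [hcast]; push_cast; ring⟩
        · -- down leg, level i = 2M-2-j
          right; right
          have hc : ((2*M-2-j:ℕ):ℝ) = 2*(M:ℝ) - 2 - (j:ℝ) := by
            have h' : (2*M-2-j) + j = 2*M-2 := by omega
            have h'' := congrArg (Nat.cast : ℕ → ℝ) h'
            push_cast at h''
            have h3 : ((2*M-2 : ℕ):ℝ) = 2*(M:ℝ) - 2 := by
              push_cast [Nat.cast_sub (by omega : 2 ≤ 2*M)]; ring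
            rw [h3] at h''
            linarith
          refine ⟨k, 2*M-2-j, by omega, by omega, by omega, ?_, ?_⟩
          · rw [hnm, vert_tooth hM hk hj1 hjlt]
            rw [Prod.mk.injEq]
            constructor
            · rw [hc]; ring
            · rcases le_or_gt j M with h | h
              · rw [if_pos h, hc]
                have hjM' : (j:ℝ) = (M:ℝ) := by exact_mod_cast (by omega : j = M)
                rw [hjM']; ring
              · rw [if_neg (by omega : ¬ j ≤ M), hc]; ring
          · rcases lt_or_ge j (2*M-2) with h | h
            · rw [show n + 1 = M - 1 + (2*M-1)*k + (j+1) by omega,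
                vert_tooth hM hk (by omega) (by omega),
                if_neg (by omega : ¬ j + 1 ≤ M), Prod.mk.injEq]
              exact ⟨by rw [hc]; push_cast; ring, by rw [hc]; push_cast; ring⟩
            · -- j = 2M-2 : last down leg of the tooth
              have hj2 : j = 2*M-2 := by omega
              have hi0 : 2*M-2-j = 0 := by omega
              have hmulsucc : (2*M-1)*(k+1) = (2*M-1)*k + (2*M-1) := Nat.mul_succ _ _
              rw [hi0]
              have hb : (baseX M r δ (k+1), (0:ℝ)) =
                  (baseX M r δ k + r + (2*(M:ℝ)-2-((0:ℕ):ℝ))*δ, ((0:ℕ):ℝ)*hh) := by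
                rw [baseX_succ, Prod.mk.injEq]
                exact ⟨by push_cast; ring, by push_cast; ring⟩
              rw [← hb]
              rcases lt_or_ge (k+1) (M-1) with hk1 | hk1
              · rw [show n + 1 = M - 1 + (2*M-1)*(k+1) by rw [hmulsucc]; omega,
                  vert_unit0 hM hk1]
              · have hkM : k + 1 = M - 1 := by omega
                rw [show n + 1 = M - 1 + (2*M-1)*(M-1) + 0 by rw [← hkM, hmulsucc]; omega, vert_end hM (by omega),
                  hkM]
                norm_num
    · -- final horizontal run
      left
      have hl : n - (M-1) - (2*M-1)*(M-1) ≤ M - 1 := by omega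
      set l := n - (M-1) - (2*M-1)*(M-1) with hldef
      have hnm : n = M - 1 + (2*M-1)*(M-1) + l := by omega
      refine ⟨baseX M r δ (M-1) + (l:ℝ)*r, ?_, ?_, ?_, ?_, ?_⟩
      · rw [hnm, vert_end hM (by omega)]
      · rw [show n + 1 = M - 1 + (2*M-1)*(M-1) + (l+1) by omega, vert_end hM (by omega),
          Prod.mk.injEq]
        exact ⟨by push_cast; ring, rfl⟩
      · have := baseX_lb hM hr.le hδ.le (M := M) (r := r) (δ := δ) (k := M-1)
        have hl0 : (0:ℝ) ≤ (l:ℝ)*r := by positivity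
        nlinarith
      · right
        have := baseX_lb hM hr.le hδ.le (M := M) (r := r) (δ := δ) (k := M-1)
        have hl0 : (0:ℝ) ≤ (l:ℝ)*r := by positivity
        nlinarith
      · rcases lt_or_ge l (M-1) with h | h
        · right
          have hcast : ((l:ℝ)+2) ≤ (M:ℝ) := by exact_mod_cast (by omega : l + 2 ≤ M)
          nlinarith
        · left
          have hlM : l = M - 1 := by omega
          constructor
          · omega
          · rw [hlM]
            have hcast : ((M-1:ℕ):ℝ) = (M:ℝ) - 1 := by
              push_cast [Nat.cast_sub (by omega : 1 ≤ M)]; ring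
            rw [hcast]
            nlinarith [hsum]

/-! ### derived parameter facts and coordinate bounds -/

def smap (M : ℕ) (r δ hh : ℝ) (n : ℕ) (q : EuclideanSpace ℝ (Fin 2)) :
    EuclideanSpace ℝ (Fin 2) :=
  (WithLp.equiv 2 (Fin 2 → ℝ)).symm
    ![(vert M r δ hh n).1 + ((vert M r δ hh (n+1)).1 - (vert M r δ hh n).1) * q 0
        - ((vert M r δ hh (n+1)).2 - (vert M r δ hh n).2) * q 1,
      (vert M r δ hh n).2 + ((vert M r δ hh (n+1)).2 - (vert M r δ hh n).2) * q 0
        + ((vert M r δ hh (n+1)).1 - (vert M r δ hh n).1) * q 1]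

lemma smap_apply0 (n : ℕ) (q : EuclideanSpace ℝ (Fin 2)) :
    smap M r δ hh n q 0 = (vert M r δ hh n).1
        + ((vert M r δ hh (n+1)).1 - (vert M r δ hh n).1) * q 0
        - ((vert M r δ hh (n+1)).2 - (vert M r δ hh n).2) * q 1 := rfl

lemma smap_apply1 (n : ℕ) (q : EuclideanSpace ℝ (Fin 2)) :
    smap M r δ hh n q 1 = (vert M r δ hh n).2
        + ((vert M r δ hh (n+1)).2 - (vert M r δ hh n).2) * q 0
        + ((vert M r δ hh (n+1)).1 - (vert M r δ hh n).1) * q 1 := rfl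

lemma triD_spec {q : EuclideanSpace ℝ (Fin 2)} (hq : q ∈ triD) :
    0 < q 0 ∧ q 0 < 1 ∧ 0 < q 1 ∧ q 1 < q 0 ∧ q 1 < 1 - q 0 ∧ q 1 < 1/2 := by
  obtain ⟨h1, h2, h3, h4⟩ := hq
  rcases lt_min_iff.mp h4 with ⟨h5, h6⟩
  exact ⟨h1, h2, h3, h5, h6, by linarith⟩

lemma param_hh_lt_r (hr : 0 < r) (hδ0 : 0 < δ) (hh0 : 0 < hh) (hh2 : hh^2 = r^2 - δ^2) :
    hh < r := by nlinarith

lemma param_δ_lt_hh (hδ0 : 0 < δ) (hδr : 2*δ ≤ r) (hh0 : 0 < hh) (hh2 : hh^2 = r^2 - δ^2) :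
    δ < hh := by nlinarith

/-- bounds for a horizontal segment -/
lemma boundsH (hr : 0 < r) {n : ℕ} {a : ℝ} (hd : HData M r δ hh n a)
    {x : EuclideanSpace ℝ (Fin 2)} (hx : x ∈ smap M r δ hh n '' triD) :
    a < x 0 ∧ x 0 < a + r ∧ 0 < x 1 ∧ x 1 < r/2 ∧
      a < x 0 + x 1 ∧ x 0 + x 1 < a + r ∧ a < x 0 - x 1 ∧ x 0 - x 1 < a + r := by
  obtain ⟨q, hq, rfl⟩ := hx
  obtain ⟨h1, h2, h3, h4, h5, h6⟩ := triD_spec hq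
  rw [smap_apply0, smap_apply1, hd.1, hd.2.1]
  simp only
  refine ⟨by nlinarith [mul_pos hr h1], by nlinarith [mul_pos hr (by linarith : (0:ℝ) < 1 - q 0)],
    by nlinarith [mul_pos hr h3], by nlinarith [mul_pos hr (by linarith : (0:ℝ) < 1/2 - q 1)],
    by nlinarith [mul_pos hr h1, mul_pos hr h3],
    by nlinarith [mul_pos hr (by linarith : (0:ℝ) < 1 - q 0 - q 1)],
    by nlinarith [mul_pos hr (by linarith : (0:ℝ) < q 0 - q 1)],
    by nlinarith [mul_pos hr (by linarith : (0:ℝ) < 1 - q 0 + q 1)]⟩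

/-- bounds for an up leg -/
lemma boundsU (hr : 0 < r) (hδ0 : 0 < δ) (hδr : 2*δ ≤ r) (hh0 : 0 < hh)
    (hh2 : hh^2 = r^2 - δ^2) {n k i : ℕ} (hd : UData M r δ hh n k i)
    {x : EuclideanSpace ℝ (Fin 2)} (hx : x ∈ smap M r δ hh n '' triD) :
    baseX M r δ k + r + (i:ℝ)*δ - hh/2 < x 0 ∧
    x 0 < baseX M r δ k + r + (i:ℝ)*δ + δ ∧
    (i:ℝ)*hh < x 1 ∧ x 1 < ((i:ℝ)+1)*hh ∧
    baseX M r δ k + r + (i:ℝ)*δ + (i:ℝ)*hh < x 0 + x 1 := by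
  obtain ⟨q, hq, rfl⟩ := hx
  obtain ⟨h1, h2, h3, h4, h5, h6⟩ := triD_spec hq
  have hδh : δ < hh := param_δ_lt_hh hδ0 hδr hh0 hh2
  rw [smap_apply0, smap_apply1, hd.2.2.2.1, hd.2.2.2.2]
  simp only
  refine ⟨by nlinarith [mul_pos hδ0 h1, mul_pos hh0 (by linarith : (0:ℝ) < 1/2 - q 1)],
    by nlinarith [mul_pos hδ0 (by linarith : (0:ℝ) < 1 - q 0), mul_pos hh0 h3],
    by nlinarith [mul_pos hh0 h1, mul_pos hδ0 h3],
    by nlinarith [mul_pos (by linarith : (0:ℝ) < hh - δ) (by linarith : (0:ℝ) < 1 - q 0),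
      mul_pos hδ0 (by linarith : (0:ℝ) < 1 - q 0 - q 1)],
    by nlinarith [mul_pos hδ0 (by linarith : (0:ℝ) < q 0 + q 1),
      mul_pos hh0 (by linarith : (0:ℝ) < q 0 - q 1)]⟩

/-- bounds for a down leg -/
lemma boundsD (hr : 0 < r) (hδ0 : 0 < δ) (hδr : 2*δ ≤ r) (hh0 : 0 < hh)
    (hh2 : hh^2 = r^2 - δ^2) {n k i : ℕ} (hd : DData M r δ hh n k i)
    {x : EuclideanSpace ℝ (Fin 2)} (hx : x ∈ smap M r δ hh n '' triD) :
    baseX M r δ k + r + (2*(M:ℝ)-3-(i:ℝ))*δ < x 0 ∧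
    x 0 < baseX M r δ k + r + (2*(M:ℝ)-3-(i:ℝ))*δ + δ + hh/2 ∧
    (i:ℝ)*hh < x 1 ∧ x 1 < ((i:ℝ)+1)*hh ∧
    x 0 - x 1 < baseX M r δ k + r + (2*(M:ℝ)-3-(i:ℝ))*δ + δ - (i:ℝ)*hh := by
  obtain ⟨q, hq, rfl⟩ := hx
  obtain ⟨h1, h2, h3, h4, h5, h6⟩ := triD_spec hq
  have hδh : δ < hh := param_δ_lt_hh hδ0 hδr hh0 hh2
  rw [smap_apply0, smap_apply1, hd.2.2.2.1, hd.2.2.2.2]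
  simp only
  refine ⟨by nlinarith [mul_pos hδ0 h1, mul_pos hh0 h3],
    by nlinarith [mul_pos hδ0 (by linarith : (0:ℝ) < 1 - q 0),
      mul_pos hh0 (by linarith : (0:ℝ) < 1/2 - q 1)],
    by nlinarith [mul_pos hh0 (by linarith : (0:ℝ) < 1 - q 0), mul_pos hδ0 h3],
    by nlinarith [mul_pos hδ0 (by linarith : (0:ℝ) < q 0 - q 1),
      mul_pos (by linarith : (0:ℝ) < hh - δ) h1],
    by nlinarith [mul_pos (by linarith : (0:ℝ) < hh - δ) (by linarith : (0:ℝ) < 1 - q 0 - q 1),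
      mul_pos hδ0 (by linarith : (0:ℝ) < 1 - q 0)]⟩

lemma cast_le_sub2 {i : ℕ} (hM : 3 ≤ M) (hi : i ≤ M-2) : (i:ℝ) ≤ (M:ℝ) - 2 := by
  have h := (Nat.cast_le (α := ℝ)).mpr hi
  have h2 : ((M-2 : ℕ):ℝ) = (M:ℝ) - 2 := by
    push_cast [Nat.cast_sub (by omega : 2 ≤ M)]; ring
  linarith [h2 ▸ h]

lemma baseX_ub (hM : 3 ≤ M) (hr : 0 < r) (hδ0 : 0 < δ) {k : ℕ} (hk : k ≤ M-2) :
    baseX M r δ k + r + 2*((M:ℝ)-1)*δ ≤ baseX M r δ (M-1) := by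
  have hM1 : (3:ℝ) ≤ (M:ℝ) := by exact_mod_cast hM
  have hd := baseX_diff (M := M) (r := r) (δ := δ) (show k ≤ M-1 by omega)
  have h1 : (1:ℝ) ≤ ((M-1-k : ℕ):ℝ) := by exact_mod_cast (by omega : 1 ≤ M-1-k)
  nlinarith [mul_pos (by linarith : (0:ℝ) < 2*((M:ℝ)-1)) hδ0]

lemma baseX_succ_le (hM : 3 ≤ M) (hr : 0 < r) (hδ0 : 0 < δ) {k k' : ℕ} (hk : k < k') :
    baseX M r δ k + (r + 2*((M:ℝ)-1)*δ) ≤ baseX M r δ k' := by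
  have hM1 : (3:ℝ) ≤ (M:ℝ) := by exact_mod_cast hM
  have hd := baseX_diff (M := M) (r := r) (δ := δ) hk.le
  have h1 : (1:ℝ) ≤ ((k'-k : ℕ):ℝ) := by exact_mod_cast (by omega : 1 ≤ k'-k)
  nlinarith [mul_pos (by linarith : (0:ℝ) < 2*((M:ℝ)-1)) hδ0]

/-- the image of the triangle stays inside the triangle -/
theorem smap_mapsTo (hM : 3 ≤ M) (hr : 0 < r) (hδ0 : 0 < δ) (hδr : 2*δ ≤ r) (hh0 : 0 < hh)
    (hh2 : hh^2 = r^2 - δ^2) (hsum : baseX M r δ (M-1) + (M:ℝ)*r = 1)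
    (hMr : (M:ℝ)*r ≤ 1/3) {n : ℕ} (hn : n < Ncount M) :
    smap M r δ hh n '' triD ⊆ triD := by
  have hM1 : (3:ℝ) ≤ (M:ℝ) := by exact_mod_cast hM
  have hhr : hh < r := param_hh_lt_r hr hδ0 hh0 hh2
  intro x hx
  rcases classify (hh := hh) hM hr hδ0 hsum hMr hn with ⟨a, hd⟩ | ⟨k, i, hd⟩ | ⟨k, i, hd⟩
  · obtain ⟨b1, b2, b3, b4, b5, b6, b7, b8⟩ := boundsH hr hd hx
    have ha0 : 0 ≤ a := hd.2.2.1
    have har : a + r ≤ 1 := by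
      rcases hd.2.2.2.2 with ⟨_, h⟩ | h <;> linarith
    refine ⟨by linarith, by linarith, b3, lt_min_iff.mpr ⟨by linarith, by linarith⟩⟩
  · obtain ⟨b1, b2, b3, b4, b5⟩ := boundsU hr hδ0 hδr hh0 hh2 hd hx
    have hi : (i:ℝ) ≤ (M:ℝ) - 2 := cast_le_sub2 hM hd.2.1
    have hi0 : (0:ℝ) ≤ (i:ℝ) := Nat.cast_nonneg i
    have hlb := baseX_lb hM hr.le hδ0.le (M := M) (r := r) (δ := δ) (k := k)
    have hub := baseX_ub hM hr hδ0 (M := M) (r := r) (δ := δ) hd.1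
    -- x 0 > M r - hh/2 > 0 ; x 0 < 1 - M r  ; x 1 < (M-1) hh
    have hx0lb : (M:ℝ)*r - hh/2 < x 0 := by
      nlinarith [mul_nonneg hδ0.le hi0]
    have hx0ub : x 0 < 1 - (M:ℝ)*r := by
      have : baseX M r δ k + r + ((i:ℝ)+1)*δ ≤ 1 - (M:ℝ)*r := by
        nlinarith [mul_nonneg hδ0.le (by linarith : (0:ℝ) ≤ (M:ℝ) - 2 - i)]
      linarith
    have hx1ub : x 1 < ((M:ℝ)-1)*hh := by
      nlinarith [mul_nonneg hh0.le (by linarith : (0:ℝ) ≤ (M:ℝ) - 2 - i)]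
    have hx1lb : 0 < x 1 := by nlinarith [mul_nonneg hi0 hh0.le]
    refine ⟨by nlinarith, by nlinarith, hx1lb, lt_min_iff.mpr ⟨by nlinarith, by nlinarith⟩⟩
  · obtain ⟨b1, b2, b3, b4, b5⟩ := boundsD hr hδ0 hδr hh0 hh2 hd hx
    have hi : (i:ℝ) ≤ (M:ℝ) - 2 := cast_le_sub2 hM hd.2.1
    have hi0 : (0:ℝ) ≤ (i:ℝ) := Nat.cast_nonneg i
    have hlb := baseX_lb hM hr.le hδ0.le (M := M) (r := r) (δ := δ) (k := k)
    have hub := baseX_ub hM hr hδ0 (M := M) (r := r) (δ := δ) hd.1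
    have hx0lb : (M:ℝ)*r < x 0 := by
      nlinarith [mul_nonneg hδ0.le (by linarith : (0:ℝ) ≤ 2*(M:ℝ)-3-i)]
    have hx0ub : x 0 < 1 - (M:ℝ)*r + hh/2 := by
      have : baseX M r δ k + r + (2*(M:ℝ)-3-(i:ℝ))*δ + δ ≤ 1 - (M:ℝ)*r := by
        nlinarith [mul_pos hδ0 (by linarith : (0:ℝ) < (i:ℝ) + 1)]
      linarith
    have hx1ub : x 1 < ((M:ℝ)-1)*hh := by
      nlinarith [mul_nonneg hh0.le (by linarith : (0:ℝ) ≤ (M:ℝ) - 2 - i)]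
    have hx1lb : 0 < x 1 := by nlinarith [mul_nonneg hi0 hh0.le]
    refine ⟨by nlinarith, by nlinarith, hx1lb, lt_min_iff.mpr ⟨by nlinarith, by nlinarith⟩⟩

/-- each step moves to the right by at least δ -/
lemma px_step (hM : 3 ≤ M) (hr : 0 < r) (hδ0 : 0 < δ) (hδr : 2*δ ≤ r)
    (hsum : baseX M r δ (M-1) + (M:ℝ)*r = 1) (hMr : (M:ℝ)*r ≤ 1/3)
    {n : ℕ} (hn : n < Ncount M) :
    (vert M r δ hh n).1 + δ ≤ (vert M r δ hh (n+1)).1 := by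
  rcases classify (hh := hh) hM hr hδ0 hsum hMr hn with ⟨a, hd⟩ | ⟨k, i, hd⟩ | ⟨k, i, hd⟩
  · rw [hd.1, hd.2.1]; simp only; linarith
  · rw [hd.2.2.2.1, hd.2.2.2.2]; simp only; linarith
  · rw [hd.2.2.2.1, hd.2.2.2.2]; simp only; linarith

lemma px_mono (hM : 3 ≤ M) (hr : 0 < r) (hδ0 : 0 < δ) (hδr : 2*δ ≤ r)
    (hsum : baseX M r δ (M-1) + (M:ℝ)*r = 1) (hMr : (M:ℝ)*r ≤ 1/3) :
    ∀ b, b ≤ Ncount M → ∀ a, a ≤ b →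
      (vert M r δ hh a).1 + ((b-a:ℕ):ℝ)*δ ≤ (vert M r δ hh b).1 := by
  intro b
  induction b with
  | zero =>
    intro _ a ha
    interval_cases a
    simp
  | succ b ih =>
    intro hb a ha
    rcases Nat.lt_or_ge a (b+1) with h | h
    · have h1 := ih (by omega) a (by omega)
      have h2 := px_step (hh := hh) hM hr hδ0 hδr hsum hMr (n := b) (by omega)
      have h3 : ((b+1-a:ℕ):ℝ) = ((b-a:ℕ):ℝ) + 1 := by
        exact_mod_cast congrArg (Nat.cast : ℕ → ℝ) (by omega : b+1-a = (b-a)+1)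
      rw [h3]
      linarith
    · have : a = b + 1 := by omega
      subst this
      simp

/-- the squared step length is r² -/
lemma dsq (hM : 3 ≤ M) (hr : 0 < r) (hδ0 : 0 < δ) (hh2 : hh^2 = r^2 - δ^2)
    (hsum : baseX M r δ (M-1) + (M:ℝ)*r = 1) (hMr : (M:ℝ)*r ≤ 1/3)
    {n : ℕ} (hn : n < Ncount M) :
    ((vert M r δ hh (n+1)).1 - (vert M r δ hh n).1)^2
      + ((vert M r δ hh (n+1)).2 - (vert M r δ hh n).2)^2 = r^2 := by
  rcases classify (hh := hh) hM hr hδ0 hsum hMr hn with ⟨a, hd⟩ | ⟨k, i, hd⟩ | ⟨k, i, hd⟩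
  · rw [hd.1, hd.2.1]; simp only; ring_nf
  · rw [hd.2.2.2.1, hd.2.2.2.2]; simp only; ring_nf; linarith [hh2]
  · rw [hd.2.2.2.1, hd.2.2.2.2]; simp only; ring_nf; linarith [hh2]

/-! ### separation helpers -/

lemma sep_open {s t : Set (EuclideanSpace ℝ (Fin 2))} {c₀ c₁ c : ℝ}
    (h1 : ∀ x ∈ s, c₀ * x 0 + c₁ * x 1 < c) (h2 : ∀ x ∈ t, c ≤ c₀ * x 0 + c₁ * x 1) :
    s ∩ t = ∅ := by
  ext x
  simp only [Set.mem_inter_iff, Set.mem_empty_iff_false, iff_false, not_and]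
  intro hs ht
  exact absurd (h2 x ht) (not_le.mpr (h1 x hs))

lemma sep_closure {s t : Set (EuclideanSpace ℝ (Fin 2))} {c₀ c₁ c c' : ℝ} (hcc : c < c')
    (h1 : ∀ x ∈ s, c₀ * x 0 + c₁ * x 1 ≤ c) (h2 : ∀ x ∈ t, c' ≤ c₀ * x 0 + c₁ * x 1) :
    closure s ∩ closure t = ∅ := by
  have hf : Continuous fun x : EuclideanSpace ℝ (Fin 2) => c₀ * x 0 + c₁ * x 1 := by
    exact ((continuous_const.mul (EuclideanSpace.proj (0 : Fin 2)).continuous).add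
      (continuous_const.mul (EuclideanSpace.proj (1 : Fin 2)).continuous))
  have hcs : closure s ⊆ {x | c₀ * x 0 + c₁ * x 1 ≤ c} :=
    closure_minimal h1 (isClosed_le hf continuous_const)
  have hct : closure t ⊆ {x | c' ≤ c₀ * x 0 + c₁ * x 1} :=
    closure_minimal h2 (isClosed_le continuous_const hf)
  ext x
  simp only [Set.mem_inter_iff, Set.mem_empty_iff_false, iff_false, not_and]
  intro hs ht
  have := hcs hs
  have := hct ht
  simp only [Set.mem_setOf_eq] at *
  linarith

lemma disj_of_closure {s t : Set (EuclideanSpace ℝ (Fin 2))}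
    (h : closure s ∩ closure t = ∅) : s ∩ t = ∅ := by
  have : s ∩ t ⊆ closure s ∩ closure t :=
    Set.inter_subset_inter subset_closure subset_closure
  exact Set.subset_empty_iff.mp (h ▸ this)

/-- extra bound: separating functional at the peak, up side -/
lemma boundsUpeak (hr : 0 < r) (hδ0 : 0 < δ) (hδr : 2*δ ≤ r) (hh0 : 0 < hh)
    (hh2 : hh^2 = r^2 - δ^2) {n k i : ℕ} (hd : UData M r δ hh n k i)
    {x : EuclideanSpace ℝ (Fin 2)} (hx : x ∈ smap M r δ hh n '' triD) :
    hh * x 0 - δ * x 1 < hh * (baseX M r δ k + r + (i:ℝ)*δ) - δ * ((i:ℝ)*hh) := by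
  obtain ⟨q, hq, rfl⟩ := hx
  obtain ⟨h1, h2, h3, h4, h5, h6⟩ := triD_spec hq
  rw [smap_apply0, smap_apply1, hd.2.2.2.1, hd.2.2.2.2]
  simp only
  nlinarith [mul_pos (by nlinarith : (0:ℝ) < hh^2 + δ^2) h3]

/-- extra bound: separating functional at the peak, down side -/
lemma boundsDpeak (hr : 0 < r) (hδ0 : 0 < δ) (hδr : 2*δ ≤ r) (hh0 : 0 < hh)
    (hh2 : hh^2 = r^2 - δ^2) {n k i : ℕ} (hd : DData M r δ hh n k i)
    {x : EuclideanSpace ℝ (Fin 2)} (hx : x ∈ smap M r δ hh n '' triD) :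
    hh * (baseX M r δ k + r + (2*(M:ℝ)-3-(i:ℝ))*δ) - δ * (((i:ℝ)+1)*hh)
      < hh * x 0 - δ * x 1 := by
  obtain ⟨q, hq, rfl⟩ := hx
  obtain ⟨h1, h2, h3, h4, h5, h6⟩ := triD_spec hq
  have hδh : δ < hh := param_δ_lt_hh hδ0 hδr hh0 hh2
  rw [smap_apply0, smap_apply1, hd.2.2.2.1, hd.2.2.2.2]
  simp only
  nlinarith [mul_pos (mul_pos hh0 hδ0) h1,
    mul_pos (by nlinarith : (0:ℝ) < hh^2 - δ^2) h3]


theorem pair_disj (hM : 3 ≤ M) (hr : 0 < r) (hδ0 : 0 < δ) (hδr : 2*δ ≤ r) (hh0 : 0 < hh)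
    (hh2 : hh^2 = r^2 - δ^2) (hsum : baseX M r δ (M-1) + (M:ℝ)*r = 1) (hMr : (M:ℝ)*r ≤ 1/3)
    {n₁ n₂ : ℕ} (h12 : n₁ < n₂) (hn2 : n₂ < Ncount M) :
    (smap M r δ hh n₁ '' triD ∩ smap M r δ hh n₂ '' triD = ∅) ∧
      (n₁ + 1 < n₂ →
        closure (smap M r δ hh n₁ '' triD) ∩ closure (smap M r δ hh n₂ '' triD) = ∅) := by
  have hM1 : (3:ℝ) ≤ (M:ℝ) := by exact_mod_cast hM
  have hhr : hh < r := param_hh_lt_r hr hδ0 hh0 hh2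
  have hδh : δ < hh := param_δ_lt_hh hδ0 hδr hh0 hh2
  have hn1 : n₁ < Ncount M := h12.trans hn2
  have hmono := px_mono (hh := hh) hM hr hδ0 hδr hsum hMr n₂ hn2.le (n₁+1) h12
  have hgap0 : (0:ℝ) ≤ ((n₂-(n₁+1):ℕ):ℝ) := Nat.cast_nonneg _
  have mono1 : (vert M r δ hh (n₁+1)).1 ≤ (vert M r δ hh n₂).1 := by nlinarith
  have mono2 : n₁ + 1 < n₂ → (vert M r δ hh (n₁+1)).1 + δ ≤ (vert M r δ hh n₂).1 := by
    intro h
    have h1 : (1:ℝ) ≤ ((n₂-(n₁+1):ℕ):ℝ) := by exact_mod_cast (by omega : 1 ≤ n₂-(n₁+1))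
    nlinarith
  have hmulM : ∀ {u v : ℕ}, u < v → (2*M-1)*u + (2*M-1) ≤ (2*M-1)*v := by
    intro u v huv
    have h' := Nat.mul_le_mul_left (2*M-1) (by omega : u+1 ≤ v)
    rw [Nat.mul_succ] at h'
    exact h'
  rcases classify (hh := hh) hM hr hδ0 hsum hMr hn1 with ⟨a₁, hd₁⟩ | ⟨k₁, i₁, hd₁⟩ | ⟨k₁, i₁, hd₁⟩ <;>
    rcases classify (hh := hh) hM hr hδ0 hsum hMr hn2 with ⟨a₂, hd₂⟩ | ⟨k₂, i₂, hd₂⟩ | ⟨k₂, i₂, hd₂⟩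
  -- ============ case H H ============
  · have e1 : (vert M r δ hh (n₁+1)).1 = a₁ + r := by rw [hd₁.2.1]
    have e2 : (vert M r δ hh n₂).1 = a₂ := by rw [hd₂.1]
    rw [e1, e2] at mono1 mono2
    constructor
    · exact sep_open (c₀ := 1) (c₁ := 0) (c := a₂)
        (fun x hx => by have := (boundsH hr hd₁ hx).2.1; linarith)
        (fun x hx => by have := (boundsH hr hd₂ hx).1; linarith)
    · intro hgt
      exact sep_closure (c₀ := 1) (c₁ := 0) (show a₁ + r < a₂ by linarith [mono2 hgt])
        (fun x hx => by have := (boundsH hr hd₁ hx).2.1; linarith)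
        (fun x hx => by have := (boundsH hr hd₂ hx).1; linarith)
  -- ============ case H U ============
  · have e1 : (vert M r δ hh (n₁+1)).1 = a₁ + r := by rw [hd₁.2.1]
    have e2 : (vert M r δ hh n₂).1 = baseX M r δ k₂ + r + (i₂:ℝ)*δ := by rw [hd₂.2.2.2.1]
    rw [e1, e2] at mono1 mono2
    have hi20 : (0:ℝ) ≤ (i₂:ℝ)*hh := mul_nonneg (Nat.cast_nonneg _) hh0.le
    constructor
    · exact sep_open (c₀ := 1) (c₁ := 1)
        (c := baseX M r δ k₂ + r + (i₂:ℝ)*δ + (i₂:ℝ)*hh)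
        (fun x hx => by have := (boundsH hr hd₁ hx).2.2.2.2.2.1; linarith)
        (fun x hx => by have := (boundsU hr hδ0 hδr hh0 hh2 hd₂ hx).2.2.2.2; linarith)
    · intro hgt
      have h2 := mono2 hgt
      exact sep_closure (c₀ := 1) (c₁ := 1)
        (show a₁ + r < baseX M r δ k₂ + r + (i₂:ℝ)*δ + (i₂:ℝ)*hh by linarith)
        (fun x hx => by have := (boundsH hr hd₁ hx).2.2.2.2.2.1; linarith)
        (fun x hx => by have := (boundsU hr hδ0 hδr hh0 hh2 hd₂ hx).2.2.2.2; linarith)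
  -- ============ case H D ============
  · have e1 : (vert M r δ hh (n₁+1)).1 = a₁ + r := by rw [hd₁.2.1]
    have e2 : (vert M r δ hh n₂).1 = baseX M r δ k₂ + r + (2*(M:ℝ)-3-(i₂:ℝ))*δ := by
      rw [hd₂.2.2.2.1]
    rw [e1, e2] at mono1 mono2
    constructor
    · exact sep_open (c₀ := 1) (c₁ := 0)
        (c := baseX M r δ k₂ + r + (2*(M:ℝ)-3-(i₂:ℝ))*δ)
        (fun x hx => by have := (boundsH hr hd₁ hx).2.1; linarith)
        (fun x hx => by have := (boundsD hr hδ0 hδr hh0 hh2 hd₂ hx).1; linarith)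
    · intro hgt
      have h2 := mono2 hgt
      exact sep_closure (c₀ := 1) (c₁ := 0)
        (show a₁ + r < baseX M r δ k₂ + r + (2*(M:ℝ)-3-(i₂:ℝ))*δ by linarith)
        (fun x hx => by have := (boundsH hr hd₁ hx).2.1; linarith)
        (fun x hx => by have := (boundsD hr hδ0 hδr hh0 hh2 hd₂ hx).1; linarith)
  -- ============ case U H ============
  · have e1 : (vert M r δ hh (n₁+1)).1 = baseX M r δ k₁ + r + ((i₁:ℝ)+1)*δ := by
      rw [hd₁.2.2.2.2]
    have e2 : (vert M r δ hh n₂).1 = a₂ := by rw [hd₂.1]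
    rw [e1, e2] at mono1 mono2
    constructor
    · exact sep_open (c₀ := 1) (c₁ := 0) (c := a₂)
        (fun x hx => by have := (boundsU hr hδ0 hδr hh0 hh2 hd₁ hx).2.1; linarith)
        (fun x hx => by have := (boundsH hr hd₂ hx).1; linarith)
    · intro hgt
      have h2 := mono2 hgt
      exact sep_closure (c₀ := 1) (c₁ := 0) (show baseX M r δ k₁ + r + (i₁:ℝ)*δ + δ < a₂ by linarith)
        (fun x hx => by have := (boundsU hr hδ0 hδr hh0 hh2 hd₁ hx).2.1; linarith)
        (fun x hx => by have := (boundsH hr hd₂ hx).1; linarith)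
  -- ============ case U U ============
  · have hf₁ := hd₁.2.2.1
    have hf₂ := hd₂.2.2.1
    have hb₁ := hd₁.2.1
    have hb₂ := hd₂.2.1
    rcases Nat.lt_trichotomy k₁ k₂ with hk | hk | hk
    · have hb := baseX_succ_le hM hr hδ0 (M := M) (r := r) (δ := δ) hk
      have hi1 := cast_le_sub2 hM hb₁
      have hi2c : (0:ℝ) ≤ (i₂:ℝ) := Nat.cast_nonneg _
      have hgap : baseX M r δ k₁ + r + (i₁:ℝ)*δ + δ
          < baseX M r δ k₂ + r + (i₂:ℝ)*δ - hh/2 := by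
        nlinarith [mul_nonneg hδ0.le (by linarith : (0:ℝ) ≤ (M:ℝ)-2-(i₁:ℝ)),
          mul_nonneg hδ0.le hi2c]
      have hcl := sep_closure (c₀ := 1) (c₁ := 0) hgap
        (fun x hx => by have := (boundsU hr hδ0 hδr hh0 hh2 hd₁ hx).2.1; linarith)
        (fun x hx => by have := (boundsU hr hδ0 hδr hh0 hh2 hd₂ hx).1; linarith)
      exact ⟨disj_of_closure hcl, fun _ => hcl⟩
    · subst hk
      have hii : i₁ < i₂ := by omega
      by_cases hadj : i₂ = i₁ + 1
      · constructor
        · have hcast : (i₂:ℝ) = (i₁:ℝ) + 1 := by exact_mod_cast hadj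
          exact sep_open (c₀ := 0) (c₁ := 1) (c := ((i₁:ℝ)+1)*hh)
            (fun x hx => by have := (boundsU hr hδ0 hδr hh0 hh2 hd₁ hx).2.2.2.1; linarith)
            (fun x hx => by
              have := (boundsU hr hδ0 hδr hh0 hh2 hd₂ hx).2.2.1
              rw [hcast] at this; linarith)
        · intro hgt; exfalso; omega
      · have hge : i₁ + 2 ≤ i₂ := by omega
        have hcast : (i₁:ℝ) + 2 ≤ (i₂:ℝ) := by exact_mod_cast hge
        have hgap : ((i₁:ℝ)+1)*hh < (i₂:ℝ)*hh := by
          nlinarith [mul_pos hh0 (by linarith : (0:ℝ) < (i₂:ℝ) - (i₁:ℝ) - 1)]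
        have hcl := sep_closure (c₀ := 0) (c₁ := 1) hgap
          (fun x hx => by have := (boundsU hr hδ0 hδr hh0 hh2 hd₁ hx).2.2.2.1; linarith)
          (fun x hx => by have := (boundsU hr hδ0 hδr hh0 hh2 hd₂ hx).2.2.1; linarith)
        exact ⟨disj_of_closure hcl, fun _ => hcl⟩
    · exfalso
      have := hmulM hk
      omega
  -- ============ case U D ============
  · have hf₁ := hd₁.2.2.1
    have hf₂ := hd₂.2.2.1
    have hb₁ := hd₁.2.1
    have hb₂ := hd₂.2.1
    rcases Nat.lt_trichotomy k₁ k₂ with hk | hk | hk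
    · have hb := baseX_succ_le hM hr hδ0 (M := M) (r := r) (δ := δ) hk
      have hi1 := cast_le_sub2 hM hb₁
      have hi2 := cast_le_sub2 hM hb₂
      have hgap : baseX M r δ k₁ + r + (i₁:ℝ)*δ + δ
          < baseX M r δ k₂ + r + (2*(M:ℝ)-3-(i₂:ℝ))*δ := by
        nlinarith [mul_nonneg hδ0.le
          (by linarith : (0:ℝ) ≤ 2*(M:ℝ)-4-(i₁:ℝ)-(i₂:ℝ))]
      have hcl := sep_closure (c₀ := 1) (c₁ := 0) hgap
        (fun x hx => by have := (boundsU hr hδ0 hδr hh0 hh2 hd₁ hx).2.1; linarith)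
        (fun x hx => by have := (boundsD hr hδ0 hδr hh0 hh2 hd₂ hx).1; linarith)
      exact ⟨disj_of_closure hcl, fun _ => hcl⟩
    · subst hk
      by_cases hpeak : i₁ = M-2 ∧ i₂ = M-2
      · have hc1 : (i₁:ℝ) = (M:ℝ) - 2 := by
          rw [hpeak.1]; push_cast [Nat.cast_sub (by omega : 2 ≤ M)]; ring
        have hc2 : (i₂:ℝ) = (M:ℝ) - 2 := by
          rw [hpeak.2]; push_cast [Nat.cast_sub (by omega : 2 ≤ M)]; ring
        have hceq : hh*(baseX M r δ k₁ + r + (2*(M:ℝ)-3-(i₂:ℝ))*δ) - δ*(((i₂:ℝ)+1)*hh)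
            = hh*(baseX M r δ k₁ + r + (i₁:ℝ)*δ) - δ*((i₁:ℝ)*hh) := by
          rw [hc1, hc2]; ring
        constructor
        · exact sep_open (c₀ := hh) (c₁ := -δ)
            (c := hh*(baseX M r δ k₁ + r + (i₁:ℝ)*δ) - δ*((i₁:ℝ)*hh))
            (fun x hx => by
              have := boundsUpeak hr hδ0 hδr hh0 hh2 hd₁ hx; linarith)
            (fun x hx => by
              have := boundsDpeak hr hδ0 hδr hh0 hh2 hd₂ hx
              rw [hceq] at this; linarith)
        · intro hgt; exfalso; omega
      · have hii : i₁ + i₂ + 5 ≤ 2*M := by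
          rcases not_and_or.mp hpeak with h | h <;> omega
        have hiir : (i₁:ℝ) + (i₂:ℝ) + 5 ≤ 2*(M:ℝ) := by exact_mod_cast hii
        have hgap : baseX M r δ k₁ + r + (i₁:ℝ)*δ + δ
            < baseX M r δ k₁ + r + (2*(M:ℝ)-3-(i₂:ℝ))*δ := by
          nlinarith [mul_nonneg hδ0.le
            (by linarith : (0:ℝ) ≤ 2*(M:ℝ)-5-(i₁:ℝ)-(i₂:ℝ))]
        have hcl := sep_closure (c₀ := 1) (c₁ := 0) hgap
          (fun x hx => by have := (boundsU hr hδ0 hδr hh0 hh2 hd₁ hx).2.1; linarith)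
          (fun x hx => by have := (boundsD hr hδ0 hδr hh0 hh2 hd₂ hx).1; linarith)
        exact ⟨disj_of_closure hcl, fun _ => hcl⟩
    · exfalso
      have := hmulM hk
      omega
  -- ============ case D H ============
  · have e1 : (vert M r δ hh (n₁+1)).1 = baseX M r δ k₁ + r + (2*(M:ℝ)-2-(i₁:ℝ))*δ := by
      rw [hd₁.2.2.2.2]
    have e2 : (vert M r δ hh n₂).1 = a₂ := by rw [hd₂.1]
    rw [e1, e2] at mono1 mono2
    have hi10 : (0:ℝ) ≤ (i₁:ℝ)*hh := mul_nonneg (Nat.cast_nonneg _) hh0.le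
    constructor
    · exact sep_open (c₀ := 1) (c₁ := -1) (c := a₂)
        (fun x hx => by
          have := (boundsD hr hδ0 hδr hh0 hh2 hd₁ hx).2.2.2.2; linarith)
        (fun x hx => by have := (boundsH hr hd₂ hx).2.2.2.2.2.2.1; linarith)
    · intro hgt
      have h2 := mono2 hgt
      exact sep_closure (c₀ := 1) (c₁ := -1)
        (show baseX M r δ k₁ + r + (2*(M:ℝ)-3-(i₁:ℝ))*δ + δ < a₂ by linarith)
        (fun x hx => by
          have := (boundsD hr hδ0 hδr hh0 hh2 hd₁ hx).2.2.2.2; linarith)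
        (fun x hx => by have := (boundsH hr hd₂ hx).2.2.2.2.2.2.1; linarith)
  -- ============ case D U ============
  · have hf₁ := hd₁.2.2.1
    have hf₂ := hd₂.2.2.1
    have hb₁ := hd₁.2.1
    have hb₂ := hd₂.2.1
    rcases Nat.lt_trichotomy k₁ k₂ with hk | hk | hk
    · have hb := baseX_succ_le hM hr hδ0 (M := M) (r := r) (δ := δ) hk
      have hi1 := cast_le_sub2 hM hb₁
      have hi10 : (0:ℝ) ≤ (i₁:ℝ) := Nat.cast_nonneg _
      have hi20 : (0:ℝ) ≤ (i₂:ℝ) := Nat.cast_nonneg _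
      have hgap : baseX M r δ k₁ + r + (2*(M:ℝ)-3-(i₁:ℝ))*δ + δ + hh/2
          < baseX M r δ k₂ + r + (i₂:ℝ)*δ - hh/2 := by
        nlinarith [mul_nonneg hδ0.le hi10, mul_nonneg hδ0.le hi20]
      have hcl := sep_closure (c₀ := 1) (c₁ := 0) hgap
        (fun x hx => by have := (boundsD hr hδ0 hδr hh0 hh2 hd₁ hx).2.1; linarith)
        (fun x hx => by have := (boundsU hr hδ0 hδr hh0 hh2 hd₂ hx).1; linarith)
      exact ⟨disj_of_closure hcl, fun _ => hcl⟩
    · exfalso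
      subst hk
      omega
    · exfalso
      have := hmulM hk
      omega
  -- ============ case D D ============
  · have hf₁ := hd₁.2.2.1
    have hf₂ := hd₂.2.2.1
    have hb₁ := hd₁.2.1
    have hb₂ := hd₂.2.1
    rcases Nat.lt_trichotomy k₁ k₂ with hk | hk | hk
    · have hb := baseX_succ_le hM hr hδ0 (M := M) (r := r) (δ := δ) hk
      have hi2 := cast_le_sub2 hM hb₂
      have hi10 : (0:ℝ) ≤ (i₁:ℝ) := Nat.cast_nonneg _
      have hgap : baseX M r δ k₁ + r + (2*(M:ℝ)-3-(i₁:ℝ))*δ + δ + hh/2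
          < baseX M r δ k₂ + r + (2*(M:ℝ)-3-(i₂:ℝ))*δ := by
        nlinarith [mul_nonneg hδ0.le hi10,
          mul_nonneg hδ0.le (by linarith : (0:ℝ) ≤ (M:ℝ)-2-(i₂:ℝ))]
      have hcl := sep_closure (c₀ := 1) (c₁ := 0) hgap
        (fun x hx => by have := (boundsD hr hδ0 hδr hh0 hh2 hd₁ hx).2.1; linarith)
        (fun x hx => by have := (boundsD hr hδ0 hδr hh0 hh2 hd₂ hx).1; linarith)
      exact ⟨disj_of_closure hcl, fun _ => hcl⟩
    · subst hk
      have hii : i₂ < i₁ := by omega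
      by_cases hadj : i₁ = i₂ + 1
      · constructor
        · have hcast : (i₁:ℝ) = (i₂:ℝ) + 1 := by exact_mod_cast hadj
          exact sep_open (c₀ := 0) (c₁ := -1) (c := -((i₁:ℝ)*hh))
            (fun x hx => by have := (boundsD hr hδ0 hδr hh0 hh2 hd₁ hx).2.2.1; linarith)
            (fun x hx => by
              have := (boundsD hr hδ0 hδr hh0 hh2 hd₂ hx).2.2.2.1
              rw [hcast] at *; linarith)
        · intro hgt; exfalso; omega
      · have hge : i₂ + 2 ≤ i₁ := by omega
        have hcast : (i₂:ℝ) + 2 ≤ (i₁:ℝ) := by exact_mod_cast hge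
        have hgap : -((i₁:ℝ)*hh) < -(((i₂:ℝ)+1)*hh) := by
          nlinarith [mul_pos hh0 (by linarith : (0:ℝ) < (i₁:ℝ) - (i₂:ℝ) - 1)]
        have hcl := sep_closure (c₀ := 0) (c₁ := -1) hgap
          (fun x hx => by have := (boundsD hr hδ0 hδr hh0 hh2 hd₁ hx).2.2.1; linarith)
          (fun x hx => by have := (boundsD hr hδ0 hδr hh0 hh2 hd₂ hx).2.2.2.1; linarith)
        exact ⟨disj_of_closure hcl, fun _ => hcl⟩
    · exfalso
      have := hmulM hk
      omega


def mkE (x y : ℝ) : EuclideanSpace ℝ (Fin 2) :=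
  (WithLp.equiv 2 (Fin 2 → ℝ)).symm ![x, y]

@[simp] lemma mkE_zero {x y : ℝ} : mkE x y 0 = x := rfl
@[simp] lemma mkE_one {x y : ℝ} : mkE x y 1 = y := rfl

lemma mkE_eta (q : EuclideanSpace ℝ (Fin 2)) : mkE (q 0) (q 1) = q := by
  ext i
  fin_cases i <;> rfl

lemma segL_eq : segL = (fun t : ℝ => mkE t 0) '' Set.Icc 0 1 := by
  ext q
  constructor
  · rintro ⟨h1, h2⟩
    refine ⟨q 0, h1, ?_⟩
    show mkE (q 0) 0 = q
    rw [← h2]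
    exact mkE_eta q
  · rintro ⟨t, ht, rfl⟩
    exact ⟨ht, rfl⟩

/-- the similarity property -/
lemma smap_norm (hM : 3 ≤ M) (hr : 0 < r) (hδ0 : 0 < δ) (hh2 : hh^2 = r^2 - δ^2)
    (hsum : baseX M r δ (M-1) + (M:ℝ)*r = 1) (hMr : (M:ℝ)*r ≤ 1/3)
    {n : ℕ} (hn : n < Ncount M) (a b : EuclideanSpace ℝ (Fin 2)) :
    ‖smap M r δ hh n a - smap M r δ hh n b‖ = r * ‖a - b‖ := by
  have hd := dsq (hh := hh) hM hr hδ0 hh2 hsum hMr hn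
  rw [EuclideanSpace.norm_eq, EuclideanSpace.norm_eq, Fin.sum_univ_two, Fin.sum_univ_two]
  rw [PiLp.sub_apply, PiLp.sub_apply, PiLp.sub_apply, PiLp.sub_apply]
  rw [smap_apply0, smap_apply1, smap_apply0, smap_apply1]
  simp only [Real.norm_eq_abs, sq_abs]
  have key : ((vert M r δ hh n).1 + ((vert M r δ hh (n+1)).1 - (vert M r δ hh n).1) * a 0
        - ((vert M r δ hh (n+1)).2 - (vert M r δ hh n).2) * a 1
      - ((vert M r δ hh n).1 + ((vert M r δ hh (n+1)).1 - (vert M r δ hh n).1) * b 0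
        - ((vert M r δ hh (n+1)).2 - (vert M r δ hh n).2) * b 1))^2
      + ((vert M r δ hh n).2 + ((vert M r δ hh (n+1)).2 - (vert M r δ hh n).2) * a 0
        + ((vert M r δ hh (n+1)).1 - (vert M r δ hh n).1) * a 1
      - ((vert M r δ hh n).2 + ((vert M r δ hh (n+1)).2 - (vert M r δ hh n).2) * b 0
        + ((vert M r δ hh (n+1)).1 - (vert M r δ hh n).1) * b 1))^2
      = r^2 * ((a 0 - b 0)^2 + (a 1 - b 1)^2) := by
    linear_combination ((a 0 - b 0)^2 + (a 1 - b 1)^2) * hd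
  rw [key, Real.sqrt_mul (sq_nonneg r), Real.sqrt_sq hr.le]

/-- the image of the unit segment is a segment -/
lemma smap_segL (n : ℕ) :
    smap M r δ hh n '' segL
      = segment ℝ (mkE (vert M r δ hh n).1 (vert M r δ hh n).2)
          (mkE (vert M r δ hh (n+1)).1 (vert M r δ hh (n+1)).2) := by
  rw [segment_eq_image', segL_eq, ← Set.image_comp]
  apply Set.image_congr
  intro t _
  ext i
  fin_cases i
  · show smap M r δ hh n (mkE t 0) 0 = _
    rw [smap_apply0]
    simp only [Fin.mk_zero, Fin.mk_one, mkE_zero, mkE_one, PiLp.add_apply, PiLp.smul_apply,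
      PiLp.sub_apply, smul_eq_mul]
    ring
  · show smap M r δ hh n (mkE t 0) 1 = _
    rw [smap_apply1]
    simp only [Fin.mk_zero, Fin.mk_one, mkE_zero, mkE_one, PiLp.add_apply, PiLp.smul_apply,
      PiLp.sub_apply, smul_eq_mul]
    ring

/-- Hausdorff measure of the image of the segment -/
lemma smap_measure (hM : 3 ≤ M) (hr : 0 < r) (hδ0 : 0 < δ) (hh2 : hh^2 = r^2 - δ^2)
    (hsum : baseX M r δ (M-1) + (M:ℝ)*r = 1) (hMr : (M:ℝ)*r ≤ 1/3)
    {n : ℕ} (hn : n < Ncount M) :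
    μH[1] (smap M r δ hh n '' segL) = ENNReal.ofReal r := by
  rw [smap_segL, hausdorffMeasure_segment, edist_dist]
  congr 1
  rw [EuclideanSpace.dist_eq, Fin.sum_univ_two]
  simp only [mkE_zero, mkE_one, Real.dist_eq, sq_abs]
  have hd := dsq (hh := hh) hM hr hδ0 hh2 hsum hMr hn
  have : ((vert M r δ hh n).1 - (vert M r δ hh (n+1)).1)^2
      + ((vert M r δ hh n).2 - (vert M r δ hh (n+1)).2)^2 = r^2 := by linear_combination hd
  rw [this, Real.sqrt_sq hr.le]

/-! ### the curve -/

def clampR (t : ℝ) : ℝ := min 1 (max 0 t)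

def curve (M : ℕ) (r δ hh : ℝ) (t : ℝ) : EuclideanSpace ℝ (Fin 2) :=
  mkE (∑ n ∈ Finset.range (Ncount M),
        clampR ((Ncount M : ℝ)*t - n) * ((vert M r δ hh (n+1)).1 - (vert M r δ hh n).1))
      (∑ n ∈ Finset.range (Ncount M),
        clampR ((Ncount M : ℝ)*t - n) * ((vert M r δ hh (n+1)).2 - (vert M r δ hh n).2))

lemma clampR_of_le {t : ℝ} (h : t ≤ 0) : clampR t = 0 := by
  simp [clampR, max_eq_left h]

lemma clampR_of_ge {t : ℝ} (h : 1 ≤ t) : clampR t = 1 := by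
  have : max 0 t = t := max_eq_right (by linarith)
  simp [clampR, this, min_eq_left h]

lemma clampR_of_mem {t : ℝ} (h0 : 0 ≤ t) (h1 : t ≤ 1) : clampR t = t := by
  simp [clampR, max_eq_right h0, min_eq_right h1]

lemma clamp_sum {N n : ℕ} (hn : n < N) {s : ℝ} (hs0 : 0 ≤ s) (hs1 : s ≤ 1) (f : ℕ → ℝ) :
    ∑ k ∈ Finset.range N, clampR ((n:ℝ) + s - k) * f k
      = (∑ k ∈ Finset.range n, f k) + s * f n := by
  rw [Finset.range_eq_Ico, ← Finset.sum_Ico_consecutive _ (by omega : 0 ≤ n+1) (by omega : n+1 ≤ N)]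
  have h2 : ∑ k ∈ Finset.Ico (n+1) N, clampR ((n:ℝ) + s - k) * f k = 0 := by
    apply Finset.sum_eq_zero
    intro k hk
    rw [Finset.mem_Ico] at hk
    have : ((n:ℝ)) + 1 ≤ (k:ℝ) := by exact_mod_cast hk.1
    rw [clampR_of_le (by linarith), zero_mul]
  rw [h2, add_zero, ← Finset.range_eq_Ico, Finset.sum_range_succ]
  have e : (n:ℝ) + s - n = s := by ring
  rw [e, clampR_of_mem hs0 hs1]
  congr 1
  apply Finset.sum_congr rfl
  intro k hk
  rw [Finset.mem_range] at hk
  have : (k:ℝ) + 1 ≤ (n:ℝ) := by exact_mod_cast hk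
  rw [clampR_of_ge (by linarith), one_mul]

lemma Ncount_pos (hM : 3 ≤ M) : 0 < Ncount M := Nat.mul_pos (by omega) (by omega)

lemma curve_eval (hM : 3 ≤ M) {n : ℕ} (hn : n < Ncount M) {s : ℝ} (hs0 : 0 ≤ s) (hs1 : s ≤ 1) :
    curve M r δ hh (((n:ℝ) + s)/(Ncount M)) = smap M r δ hh n (mkE s 0) := by
  have hN0 : (0:ℝ) < (Ncount M : ℝ) := by exact_mod_cast Ncount_pos hM
  unfold curve
  have hx : (Ncount M:ℝ) * (((n:ℝ)+s)/(Ncount M)) = (n:ℝ) + s := by field_simp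
  simp only [hx, clamp_sum hn hs0 hs1]
  have h0 : vert M r δ hh 0 = ((0:ℝ), (0:ℝ)) := by
    rw [vert_start (by omega)]; norm_num
  ext i
  fin_cases i
  · show _ = smap M r δ hh n (mkE s 0) 0
    rw [smap_apply0, mkE_zero]
    show (∑ k ∈ Finset.range n, ((vert M r δ hh (k+1)).1 - (vert M r δ hh k).1))
        + s * ((vert M r δ hh (n+1)).1 - (vert M r δ hh n).1) = _
    rw [Finset.sum_range_sub (fun k => (vert M r δ hh k).1), h0]
    simp only [mkE_zero, mkE_one]
    ring
  · show _ = smap M r δ hh n (mkE s 0) 1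
    rw [smap_apply1, mkE_one]
    show (∑ k ∈ Finset.range n, ((vert M r δ hh (k+1)).2 - (vert M r δ hh k).2))
        + s * ((vert M r δ hh (n+1)).2 - (vert M r δ hh n).2) = _
    rw [Finset.sum_range_sub (fun k => (vert M r δ hh k).2), h0]
    simp only [mkE_zero, mkE_one]
    ring

lemma curve_continuous : Continuous (curve M r δ hh) := by
  have hc : ∀ n : ℕ, Continuous fun t : ℝ => clampR ((Ncount M : ℝ)*t - n) := by
    intro n
    exact continuous_const.min (continuous_const.max
      ((continuous_const.mul continuous_id).sub continuous_const))
  have h1 : Continuous fun t : ℝ => ∑ n ∈ Finset.range (Ncount M),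
      clampR ((Ncount M : ℝ)*t - n) * ((vert M r δ hh (n+1)).1 - (vert M r δ hh n).1) :=
    continuous_finset_sum _ (fun n _ => (hc n).mul continuous_const)
  have h2 : Continuous fun t : ℝ => ∑ n ∈ Finset.range (Ncount M),
      clampR ((Ncount M : ℝ)*t - n) * ((vert M r δ hh (n+1)).2 - (vert M r δ hh n).2) :=
    continuous_finset_sum _ (fun n _ => (hc n).mul continuous_const)
  have : Continuous fun t : ℝ => (EuclideanSpace.equiv (Fin 2) ℝ).symm
      ![∑ n ∈ Finset.range (Ncount M),
          clampR ((Ncount M : ℝ)*t - n) * ((vert M r δ hh (n+1)).1 - (vert M r δ hh n).1),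
        ∑ n ∈ Finset.range (Ncount M),
          clampR ((Ncount M : ℝ)*t - n) * ((vert M r δ hh (n+1)).2 - (vert M r δ hh n).2)] := by
    apply (EuclideanSpace.equiv (Fin 2) ℝ).symm.continuous.comp
    apply continuous_pi
    intro i
    fin_cases i
    · simpa using h1
    · simpa using h2
  exact this

lemma vert_N (hM : 3 ≤ M) (hsum : baseX M r δ (M-1) + (M:ℝ)*r = 1) :
    vert M r δ hh (Ncount M) = (1, 0) := by
  have hNc : Ncount M = M - 1 + (2*M-1)*(M-1) + M := by
    obtain ⟨M', rfl⟩ : ∃ M', M = M' + 1 := ⟨M - 1, by omega⟩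
    unfold Ncount
    have e1 : 2*(M'+1)-1 = 2*M'+1 := by omega
    have e2 : (M'+1)-1 = M' := by omega
    rw [e1, e2]; ring
  rw [hNc, vert_end hM le_rfl, Prod.mk.injEq]
  constructor
  · linarith
  · rfl

lemma curve_zero (hM : 3 ≤ M) : curve M r δ hh 0 = 0 := by
  have h := curve_eval (hh := hh) (r := r) (δ := δ) hM (Ncount_pos hM) le_rfl zero_le_one
  have e : (((0:ℕ):ℝ) + 0)/(Ncount M) = 0 := by norm_num
  rw [e] at h
  rw [h]
  ext i
  fin_cases i
  · show smap M r δ hh 0 (mkE 0 0) 0 = 0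
    rw [smap_apply0]
    have h0 : vert M r δ hh 0 = ((0:ℝ), (0:ℝ)) := by rw [vert_start (by omega)]; norm_num
    rw [h0]
    simp
  · show smap M r δ hh 0 (mkE 0 0) 1 = 0
    rw [smap_apply1]
    have h0 : vert M r δ hh 0 = ((0:ℝ), (0:ℝ)) := by rw [vert_start (by omega)]; norm_num
    rw [h0]
    simp

lemma curve_one (hM : 3 ≤ M) (hsum : baseX M r δ (M-1) + (M:ℝ)*r = 1) :
    curve M r δ hh 1 = mkE 1 0 := by
  have hN := Ncount_pos (M := M) hM
  have hN0 : (0:ℝ) < (Ncount M : ℝ) := by exact_mod_cast hN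
  have h := curve_eval (hh := hh) (r := r) (δ := δ) hM
    (show Ncount M - 1 < Ncount M by omega) (s := 1) zero_le_one le_rfl
  have e : (((Ncount M - 1:ℕ):ℝ) + 1)/(Ncount M) = 1 := by
    have : ((Ncount M - 1:ℕ):ℝ) = (Ncount M:ℝ) - 1 := by
      push_cast [Nat.cast_sub (by omega : 1 ≤ Ncount M)]; ring
    rw [this]
    field_simp; ring
  rw [e] at h
  rw [h]
  have hsucc : Ncount M - 1 + 1 = Ncount M := by omega
  ext i
  fin_cases i
  · show smap M r δ hh (Ncount M - 1) (mkE 1 0) 0 = _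
    rw [smap_apply0, hsucc, vert_N hM hsum]
    simp only [Fin.mk_zero, Fin.mk_one, mkE_zero, mkE_one]
    ring
  · show smap M r δ hh (Ncount M - 1) (mkE 1 0) 1 = _
    rw [smap_apply1, hsucc, vert_N hM hsum]
    simp only [Fin.mk_zero, Fin.mk_one, mkE_zero, mkE_one]
    ring

lemma mkE_mem_segL {s : ℝ} (hs0 : 0 ≤ s) (hs1 : s ≤ 1) : mkE s 0 ∈ segL :=
  ⟨⟨hs0, hs1⟩, rfl⟩

lemma curve_image (hM : 3 ≤ M) :
    curve M r δ hh '' Set.Icc 0 1 = ⋃ i : Fin (Ncount M), smap M r δ hh i '' segL := by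
  have hN := Ncount_pos (M := M) hM
  have hN0 : (0:ℝ) < (Ncount M : ℝ) := by exact_mod_cast hN
  apply Set.Subset.antisymm
  · rintro x ⟨t, ⟨ht0, ht1⟩, rfl⟩
    rcases eq_or_lt_of_le ht1 with h1 | h1
    · subst h1
      have h := curve_eval (hh := hh) (r := r) (δ := δ) hM
        (show Ncount M - 1 < Ncount M by omega) (s := 1) zero_le_one le_rfl
      have e : (((Ncount M - 1:ℕ):ℝ) + 1)/(Ncount M) = 1 := by
        have : ((Ncount M - 1:ℕ):ℝ) = (Ncount M:ℝ) - 1 := by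
          push_cast [Nat.cast_sub (by omega : 1 ≤ Ncount M)]; ring
        rw [this]; field_simp; ring
      rw [e] at h
      exact Set.mem_iUnion.mpr ⟨⟨Ncount M - 1, by omega⟩, mkE 1 0,
        mkE_mem_segL zero_le_one le_rfl, h.symm⟩
    · set n := ⌊(Ncount M : ℝ)*t⌋₊ with hndef
      have hNt0 : 0 ≤ (Ncount M : ℝ)*t := mul_nonneg hN0.le ht0
      have hfl : (n:ℝ) ≤ (Ncount M : ℝ)*t := Nat.floor_le hNt0
      have hfu : (Ncount M : ℝ)*t < (n:ℝ) + 1 := Nat.lt_floor_add_one _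
      have hnN : n < Ncount M := by
        have : (n:ℝ) < (Ncount M:ℝ) := by nlinarith
        exact_mod_cast this
      set s := (Ncount M : ℝ)*t - n with hsdef
      have hs0 : 0 ≤ s := by rw [hsdef]; linarith
      have hs1 : s ≤ 1 := by rw [hsdef]; linarith
      have ht : ((n:ℝ) + s)/(Ncount M) = t := by
        field_simp [hsdef]; rw [hsdef]; ring
      have h := curve_eval (hh := hh) (r := r) (δ := δ) hM hnN hs0 hs1
      rw [ht] at h
      exact Set.mem_iUnion.mpr ⟨⟨n, hnN⟩, mkE s 0, mkE_mem_segL hs0 hs1, h.symm⟩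
  · intro x hx
    obtain ⟨i, q, hq, rfl⟩ := Set.mem_iUnion.mp hx
    set s := q 0 with hsdef
    have hs0 : 0 ≤ s := hq.1.1
    have hs1 : s ≤ 1 := hq.1.2
    have hin : (i:ℝ) ≤ (Ncount M : ℝ) - 1 := by
      have : (i:ℝ) + 1 ≤ (Ncount M:ℝ) := by exact_mod_cast i.2
      linarith
    refine ⟨((i:ℝ) + s)/(Ncount M), ⟨by positivity, ?_⟩, ?_⟩
    · rw [div_le_one hN0]; linarith
    · rw [curve_eval hM i.2 hs0 hs1]
      congr 1
      rw [hsdef, ← hq.2, mkE_eta]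

/-- choice of the parameters -/
lemma param_exists (dbar α : ℝ) (hd1 : 1 < dbar) (hd2 : dbar < 2) (hα0 : 0 < α) (hα1 : α < 1) :
    ∃ M : ℕ, 3 ≤ M ∧
      (3*(M:ℝ)*((Ncount M : ℝ) ^ (-1/dbar)) ≤ 1 ∧
       1 ≤ ((M:ℝ)-1)^2*((Ncount M : ℝ) ^ (-1/dbar)) ∧
       (Ncount M : ℝ) ^ (-1/dbar) ≤ 1/4 ∧
       2*((Ncount M : ℝ) ^ (-1/dbar))^(1-α) ≤ 1) := by
  have hdb0 : (0:ℝ) < dbar := by linarith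
  set ε : ℝ := min (1/4 : ℝ) ((2:ℝ) ^ (-(1/(1-α)))) with hεdef
  have hε0 : 0 < ε := lt_min (by norm_num) (Real.rpow_pos_of_pos (by norm_num) _)
  obtain ⟨M, hMge⟩ := exists_nat_ge
    (max (max 3 ((9:ℝ) ^ (1/(2-dbar)))) (max ((32:ℝ) ^ (1/(2*dbar-2))) (1/ε)))
  have hM3 : 3 ≤ M := by
    have h3 : (3:ℝ) ≤ (M:ℝ) :=
      le_trans (le_trans (le_max_left _ _) (le_max_left _ _)) hMge
    exact_mod_cast h3
  have hMR : (3:ℝ) ≤ (M:ℝ) := by exact_mod_cast hM3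
  have hMcast : ((Ncount M : ℕ):ℝ) = (M:ℝ)*(2*(M:ℝ)-1) := by
    unfold Ncount
    push_cast [Nat.cast_sub (by omega : 1 ≤ 2*M)]
    ring
  have hNM : (M:ℝ)^2 ≤ (Ncount M : ℝ) := by rw [hMcast]; nlinarith
  have hNM2 : (Ncount M : ℝ) ≤ 2*(M:ℝ)^2 := by rw [hMcast]; nlinarith
  have hN0 : (0:ℝ) < (Ncount M : ℝ) := by nlinarith
  set r : ℝ := (Ncount M : ℝ) ^ (-1/dbar) with hrdef
  have hr0 : 0 < r := Real.rpow_pos_of_pos hN0 _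
  have hrd : r ^ dbar = ((Ncount M : ℝ))⁻¹ := by
    rw [hrdef, ← Real.rpow_mul hN0.le]
    have he : (-1/dbar)*dbar = -1 := by field_simp
    rw [he, Real.rpow_neg_one]
  have hMd2 : (M:ℝ)^dbar ≤ (M:ℝ)^2 := by
    have := Real.rpow_le_rpow_of_exponent_le (by linarith : (1:ℝ) ≤ (M:ℝ)) hd2.le
    rwa [show ((2:ℝ)) = ((2:ℕ):ℝ) by norm_num, Real.rpow_natCast] at this
  refine ⟨M, hM3, ?_, ?_, ?_, ?_⟩
  · -- 3 M r ≤ 1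
    have h9 : (9:ℝ) ≤ (M:ℝ)^(2-dbar) := by
      have hle : (9:ℝ) ^ (1/(2-dbar)) ≤ (M:ℝ) :=
        le_trans (le_trans (le_max_right _ _) (le_max_left _ _)) hMge
      have h1 : ((9:ℝ)^(1/(2-dbar)))^(2-dbar) ≤ (M:ℝ)^(2-dbar) :=
        Real.rpow_le_rpow (by positivity) hle (by linarith)
      rwa [← Real.rpow_mul (by norm_num : (0:ℝ) ≤ 9),
        one_div_mul_cancel (by linarith : (2:ℝ)-dbar ≠ 0), Real.rpow_one] at h1
    have h3d : (3:ℝ)^dbar ≤ 9 := by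
      have := Real.rpow_le_rpow_of_exponent_le (by norm_num : (1:ℝ) ≤ 3) hd2.le
      rwa [show ((2:ℝ)) = ((2:ℕ):ℝ) by norm_num, Real.rpow_natCast, show ((3:ℝ)^(2:ℕ)) = 9 by norm_num] at this
    have hMdd : (M:ℝ)^dbar * (M:ℝ)^(2-dbar) = (M:ℝ)^2 := by
      rw [← Real.rpow_add (by linarith : (0:ℝ) < (M:ℝ)),
        show dbar + (2-dbar) = 2 by ring,
        show ((2:ℝ)) = ((2:ℕ):ℝ) by norm_num, Real.rpow_natCast]
    have hkey : (3*(M:ℝ))^dbar ≤ (Ncount M : ℝ) := by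
      have e1 : (3*(M:ℝ))^dbar = 3^dbar * (M:ℝ)^dbar :=
        Real.mul_rpow (by norm_num) (by positivity)
      have h2 : (9:ℝ) * (M:ℝ)^dbar ≤ (M:ℝ)^2 := by
        nlinarith [Real.rpow_nonneg (by positivity : (0:ℝ) ≤ (M:ℝ)) dbar]
      have h3 : (3:ℝ)^dbar * (M:ℝ)^dbar ≤ 9 * (M:ℝ)^dbar := by
        nlinarith [Real.rpow_nonneg (by positivity : (0:ℝ) ≤ (M:ℝ)) dbar]
      linarith [e1 ▸ le_refl ((3*(M:ℝ))^dbar)]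
    have hfin : (3*(M:ℝ)*r)^dbar ≤ 1^dbar := by
      rw [Real.mul_rpow (by positivity) hr0.le, hrd, Real.one_rpow]
      calc (3*(M:ℝ))^dbar * (Ncount M : ℝ)⁻¹
          ≤ (Ncount M : ℝ) * (Ncount M : ℝ)⁻¹ :=
            mul_le_mul_of_nonneg_right hkey (by positivity)
        _ = 1 := mul_inv_cancel₀ hN0.ne'
    exact (Real.rpow_le_rpow_iff (by positivity) zero_le_one hdb0).mp hfin
  · -- 1 ≤ (M-1)² r
    have h32 : (32:ℝ) ≤ (M:ℝ)^(2*dbar-2) := by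
      have hle : (32:ℝ) ^ (1/(2*dbar-2)) ≤ (M:ℝ) :=
        le_trans (le_trans (le_max_left _ _) (le_max_right _ _)) hMge
      have h1 : ((32:ℝ)^(1/(2*dbar-2)))^(2*dbar-2) ≤ (M:ℝ)^(2*dbar-2) :=
        Real.rpow_le_rpow (by positivity) hle (by linarith)
      rwa [← Real.rpow_mul (by norm_num : (0:ℝ) ≤ 32),
        one_div_mul_cancel (by nlinarith : 2*dbar-2 ≠ 0), Real.rpow_one] at h1
    have hBC : ((M:ℝ)^2/4)^dbar * 4^dbar = ((M:ℝ)^2)^dbar := by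
      rw [← Real.mul_rpow (by positivity) (by norm_num)]
      norm_num
    have h4d : (4:ℝ)^dbar ≤ 16 := by
      have := Real.rpow_le_rpow_of_exponent_le (by norm_num : (1:ℝ) ≤ 4) hd2.le
      rwa [show ((2:ℝ)) = ((2:ℕ):ℝ) by norm_num, Real.rpow_natCast,
        show ((4:ℝ)^(2:ℕ)) = 16 by norm_num] at this
    have hM2d : ((M:ℝ)^2)^dbar = (M:ℝ)^(2*dbar-2) * (M:ℝ)^2 := by
      rw [← Real.rpow_natCast (M:ℝ) 2, ← Real.rpow_mul (by positivity),
        ← Real.rpow_add (by linarith : (0:ℝ) < (M:ℝ)),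
        show 2*dbar-2 + ((2:ℕ):ℝ) = ((2:ℕ):ℝ)*dbar by push_cast; ring]
    have hAB : ((M:ℝ)^2/4)^dbar ≤ (((M:ℝ)-1)^2)^dbar :=
      Real.rpow_le_rpow (by positivity) (by nlinarith) hdb0.le
    have hkey : (Ncount M : ℝ) ≤ (((M:ℝ)-1)^2)^dbar := by
      have hBpos : (0:ℝ) ≤ ((M:ℝ)^2/4)^dbar := Real.rpow_nonneg (by positivity) _
      have h1 : ((M:ℝ)^2/4)^dbar * 4^dbar ≤ ((M:ℝ)^2/4)^dbar * 16 :=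
        mul_le_mul_of_nonneg_left h4d hBpos
      have h2 : (32:ℝ) * (M:ℝ)^2 ≤ (M:ℝ)^(2*dbar-2) * (M:ℝ)^2 := by
        nlinarith [sq_nonneg (M:ℝ)]
      nlinarith
    have hfin : 1^dbar ≤ (((M:ℝ)-1)^2*r)^dbar := by
      rw [Real.mul_rpow (by positivity) hr0.le, hrd, Real.one_rpow]
      calc (1:ℝ) = (Ncount M : ℝ) * (Ncount M : ℝ)⁻¹ := (mul_inv_cancel₀ hN0.ne').symm
        _ ≤ (((M:ℝ)-1)^2)^dbar * (Ncount M : ℝ)⁻¹ :=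
            mul_le_mul_of_nonneg_right hkey (by positivity)
    exact (Real.rpow_le_rpow_iff zero_le_one (by positivity) hdb0).mp hfin
  · -- r ≤ 1/4
    have hrM : r ≤ 1/(M:ℝ) := by
      have hfin : r^dbar ≤ (1/(M:ℝ))^dbar := by
        rw [hrd, one_div, Real.inv_rpow (by positivity)]
        have h1 : (M:ℝ)^dbar ≤ (Ncount M : ℝ) := le_trans hMd2 hNM
        exact inv_anti₀ (Real.rpow_pos_of_pos (by linarith) _) h1
      exact (Real.rpow_le_rpow_iff hr0.le (by positivity) hdb0).mp hfin
    have hM4 : 1/ε ≤ (M:ℝ) :=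
      le_trans (le_trans (le_max_right _ _) (le_max_right _ _)) hMge
    have hεM : 1/(M:ℝ) ≤ ε := by
      rw [div_le_iff₀ (by linarith : (0:ℝ) < (M:ℝ))]
      rw [div_le_iff₀ hε0] at hM4
      linarith [mul_comm ε (M:ℝ) ▸ hM4]
    have : ε ≤ 1/4 := min_le_left _ _
    linarith
  · -- 2 r^(1-α) ≤ 1
    have hrM : r ≤ 1/(M:ℝ) := by
      have hfin : r^dbar ≤ (1/(M:ℝ))^dbar := by
        rw [hrd, one_div, Real.inv_rpow (by positivity)]
        have h1 : (M:ℝ)^dbar ≤ (Ncount M : ℝ) := le_trans hMd2 hNM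
        exact inv_anti₀ (Real.rpow_pos_of_pos (by linarith) _) h1
      exact (Real.rpow_le_rpow_iff hr0.le (by positivity) hdb0).mp hfin
    have hM4 : 1/ε ≤ (M:ℝ) :=
      le_trans (le_trans (le_max_right _ _) (le_max_right _ _)) hMge
    have hεM : 1/(M:ℝ) ≤ ε := by
      rw [div_le_iff₀ (by linarith : (0:ℝ) < (M:ℝ))]
      rw [div_le_iff₀ hε0] at hM4
      linarith [mul_comm ε (M:ℝ) ▸ hM4]
    have hrε : r ≤ (2:ℝ) ^ (-(1/(1-α))) := le_trans (le_trans hrM hεM) (min_le_right _ _)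
    have h1 : r^(1-α) ≤ ((2:ℝ) ^ (-(1/(1-α))))^(1-α) :=
      Real.rpow_le_rpow hr0.le hrε (by linarith)
    have h2 : ((2:ℝ) ^ (-(1/(1-α))))^(1-α) = 1/2 := by
      rw [← Real.rpow_mul (by norm_num : (0:ℝ) ≤ 2)]
      have : (-(1/(1-α)))*(1-α) = -1 := by
        have h1α : (1:ℝ) - α ≠ 0 := by linarith
        field_simp
      rw [this, Real.rpow_neg_one]
      norm_num
    rw [h2] at h1
    linarith

end SelfSimAux

/-- Lemma 4.1 of the paper: existence of a generator of a self-similar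
curve of prescribed box dimension `d̄ ∈ (1,2)`. -/
theorem exists_selfsimilar_generator
    (dbar α : ℝ) (hd1 : 1 < dbar) (hd2 : dbar < 2) (hα0 : 0 < α) (hα1 : α < 1) :
    ∃ (r : ℝ) (N : ℕ) (S : Fin N → EuclideanSpace ℝ (Fin 2) → EuclideanSpace ℝ (Fin 2)),
      r ∈ Set.Ioo (0:ℝ) 1 ∧ 1 ≤ N ∧
      -- each Sᵢ is a similarity of ratio r
      (∀ i, ∀ a b : EuclideanSpace ℝ (Fin 2), ‖S i a - S i b‖ = r * ‖a - b‖) ∧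
      -- (i) ℋ¹(Sᵢ(L)) = r
      (∀ i, μH[1] (S i '' segL) = ENNReal.ofReal r) ∧
      -- (ii) ⋃ᵢ Sᵢ(L) is the image of a continuous curve from (0,0) to (1,0)
      (∃ γ : ℝ → EuclideanSpace ℝ (Fin 2), ContinuousOn γ (Set.Icc 0 1) ∧
        γ 0 = 0 ∧ γ 1 = (WithLp.equiv 2 (Fin 2 → ℝ)).symm ![1, 0] ∧
        γ '' Set.Icc 0 1 = ⋃ i, S i '' segL) ∧
      -- (iii) N·r^d̄ = 1
      (N : ℝ) * r ^ dbar = 1 ∧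
      -- (iv)
      (∀ i, S i '' triD ⊆ triD) ∧
      (∀ i j, i ≠ j → S i '' triD ∩ S j '' triD = ∅) ∧
      (∀ i j : Fin N, 1 < |(i : ℤ) - (j : ℤ)| →
        closure (S i '' triD) ∩ closure (S j '' triD) = ∅) ∧
      -- (v)
      r < 1 / 2 ∧ 2 * r ^ (1 - α) ≤ 1 := by
  obtain ⟨M, hM3, key1, key2, key3, key4⟩ := param_exists dbar α hd1 hd2 hα0 hα1
  have hdb0 : (0:ℝ) < dbar := by linarith
  set N := Ncount M with hNdef
  set r : ℝ := (N:ℝ) ^ (-1/dbar) with hrdef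
  have hMR : (3:ℝ) ≤ (M:ℝ) := by exact_mod_cast hM3
  have hNpos : 0 < N := Ncount_pos hM3
  have hN0 : (0:ℝ) < (N:ℝ) := by exact_mod_cast hNpos
  have hr0 : 0 < r := Real.rpow_pos_of_pos hN0 _
  have hr1 : r ≤ 1/4 := key3
  have h3Mr : 3*(M:ℝ)*r ≤ 1 := key1
  have hMr : (M:ℝ)*r ≤ 1/3 := by nlinarith
  set δ : ℝ := (1 - (3*(M:ℝ)-2)*r)/(2*((M:ℝ)-1)^2) with hδdef
  have hM1pos : (0:ℝ) < ((M:ℝ)-1)^2 := by nlinarith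
  have hnum : 0 < 1 - (3*(M:ℝ)-2)*r := by nlinarith
  have hδ0 : 0 < δ := by rw [hδdef]; positivity
  have hδr : 2*δ ≤ r := by
    rw [hδdef]
    have e : 2*((1 - (3*(M:ℝ)-2)*r)/(2*((M:ℝ)-1)^2))
        = (1 - (3*(M:ℝ)-2)*r)/(((M:ℝ)-1)^2) := by
      field_simp
    rw [e, div_le_iff₀ hM1pos]
    nlinarith
  have hsum : baseX M r δ (M-1) + (M:ℝ)*r = 1 := by
    unfold baseX
    have hc : ((M-1:ℕ):ℝ) = (M:ℝ)-1 := by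
      push_cast [Nat.cast_sub (by omega : 1 ≤ M)]; ring
    rw [hc, hδdef]
    have hM1ne : (M:ℝ) - 1 ≠ 0 := by linarith
    field_simp
    ring
  set hh : ℝ := Real.sqrt (r^2 - δ^2) with hhdef
  have hr2δ : δ < r := by linarith
  have hsq : 0 < r^2 - δ^2 := by nlinarith
  have hh0 : 0 < hh := Real.sqrt_pos.mpr hsq
  have hh2 : hh^2 = r^2 - δ^2 := Real.sq_sqrt hsq.le
  refine ⟨r, N, fun i => smap M r δ hh i, ⟨hr0, by linarith⟩, hNpos, ?_, ?_, ?_, ?_, ?_, ?_, ?_,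
    by linarith, key4⟩
  · exact fun i a b => smap_norm hM3 hr0 hδ0 hh2 hsum hMr i.2 a b
  · exact fun i => smap_measure hM3 hr0 hδ0 hh2 hsum hMr i.2
  · exact ⟨curve M r δ hh, (curve_continuous).continuousOn, curve_zero hM3,
      curve_one hM3 hsum, curve_image hM3⟩
  · have hrd : r ^ dbar = ((N:ℝ))⁻¹ := by
      rw [hrdef, ← Real.rpow_mul hN0.le]
      have he : (-1/dbar)*dbar = -1 := by field_simp
      rw [he, Real.rpow_neg_one]
    rw [hrd, mul_inv_cancel₀ hN0.ne']
  · exact fun i => smap_mapsTo hM3 hr0 hδ0 hδr hh0 hh2 hsum hMr i.2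
  · intro i j hij
    rcases lt_trichotomy i j with h | h | h
    · exact (pair_disj hM3 hr0 hδ0 hδr hh0 hh2 hsum hMr
        (show i.val < j.val from h) j.2).1
    · exact absurd h hij
    · rw [Set.inter_comm]
      exact (pair_disj hM3 hr0 hδ0 hδr hh0 hh2 hsum hMr
        (show j.val < i.val from h) i.2).1
  · intro i j habs
    rcases lt_trichotomy i j with h | h | h
    · have hvallt : i.val < j.val := h
      have h2 : i.val + 1 < j.val := by
        have habs' : 1 < |(i.val : ℤ) - (j.val : ℤ)| := habs
        rw [abs_sub_comm, abs_of_nonneg (by omega : (0:ℤ) ≤ (j.val:ℤ) - i.val)] at habs'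
        omega
      exact (pair_disj hM3 hr0 hδ0 hδr hh0 hh2 hsum hMr hvallt j.2).2 h2
    · subst h; simp at habs
    · have hvallt : j.val < i.val := h
      have h2 : j.val + 1 < i.val := by
        have habs' : 1 < |(i.val : ℤ) - (j.val : ℤ)| := habs
        rw [abs_of_nonneg (by omega : (0:ℤ) ≤ (i.val:ℤ) - j.val)] at habs'
        omega
      rw [Set.inter_comm]
      exact (pair_disj hM3 hr0 hδ0 hδr hh0 hh2 hsum hMr hvallt i.2).2 h2
end
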